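/- arXiv:0911.1813 — 7 statements merged into one kernel-verified Lean document; each statement's English description precedes it below -/
import Mathlib

section
/- Let X be a nonempty finite set, D a nonempty finite multiset over X, and f_1,…,f_k : X → {0,1} predicates with k ≥ 1. Let ε ∈ (0,1) and let s be a positive integer with s ≥ (1/(2ε²))·ln(4k). Then there exists a multiset S over X with |S| = s such that |f_i(D) − f_i(S)| ≤ ε for every i ∈ {1,…,k}. -/
/-- The fraction of elements of the multiset `D` (counted with multiplicity) satisfying the
predicate `f`. -/
noncomputable def multisetFrac {X : Type*} (f : X → Bool) (D : Multiset X) : ℝ :=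
  (D.countP (fun x => f x = true) : ℝ) / (Multiset.card D : ℝ)

open Real in
lemma hoeff_aux (p : ℝ) (hp0 : 0 ≤ p) (hp1 : p ≤ 1) :
    ∀ t : ℝ, 0 ≤ t → 1 - p + p * Real.exp t ≤ Real.exp (t * p + t ^ 2 / 8) := by
  have hF : ∀ x : ℝ, 0 < 1 - p + p * Real.exp x := by
    intro x
    rcases eq_or_lt_of_le hp0 with h | h
    · simp [← h]
    · nlinarith [Real.exp_pos x]
  set F : ℝ → ℝ := fun x => 1 - p + p * Real.exp x with hFdef
  have hFd : ∀ x : ℝ, HasDerivAt F (p * Real.exp x) x := by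
    intro x
    exact ((Real.hasDerivAt_exp x).const_mul p).const_add (1 - p)
  set G' : ℝ → ℝ := fun x => p + x / 4 - p * Real.exp x / F x with hG'def
  have hGd : ∀ x : ℝ, HasDerivAt (fun x => x * p + x ^ 2 / 8 - Real.log (F x)) (G' x) x := by
    intro x
    have h2 : HasDerivAt (fun x => Real.log (F x)) (p * Real.exp x / F x) x :=
      (hFd x).log (hF x).ne'
    have h3 : HasDerivAt (fun x : ℝ => x * p + x ^ 2 / 8) (p + x / 4) x := by
      have := ((hasDerivAt_id x).mul_const p).add
        (((hasDerivAt_id x).pow 2).div_const 8)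
      refine this.congr_deriv ?_
      simp only [id]; ring
    exact h3.sub h2
  have hG'd : ∀ x : ℝ, HasDerivAt G'
      (1/4 - (p * Real.exp x / F x - (p * Real.exp x / F x) ^ 2)) x := by
    intro x
    have hdiv : HasDerivAt (fun x => p * Real.exp x / F x)
        ((p * Real.exp x * F x - p * Real.exp x * (p * Real.exp x)) / (F x) ^ 2) x :=
      ((Real.hasDerivAt_exp x).const_mul p).div (hFd x) (hF x).ne'
    have h3 : HasDerivAt (fun x : ℝ => p + x / 4) (1/4 : ℝ) x := by
      simpa using ((hasDerivAt_id x).div_const 4).const_add p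
    have := h3.sub hdiv
    convert this using 1
    · rfl
    · rfl
    · rfl
    have hfx : F x ≠ 0 := (hF x).ne'
    field_simp
  have hG'mono : Monotone G' :=
    monotone_of_deriv_nonneg (fun x => (hG'd x).differentiableAt)
      (fun x => by
        rw [(hG'd x).deriv]
        nlinarith [sq_nonneg (p * Real.exp x / F x - 1/2)])
  have hG'0 : G' 0 = 0 := by
    simp [hG'def, hFdef]
  have hG'nonneg : ∀ x : ℝ, 0 ≤ x → 0 ≤ G' x := by
    intro x hx
    rw [← hG'0]; exact hG'mono hx
  have hGmono : MonotoneOn (fun x => x * p + x ^ 2 / 8 - Real.log (F x)) (Set.Ici 0) := by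
    refine monotoneOn_of_deriv_nonneg (convex_Ici 0)
      (Continuous.continuousOn (by fun_prop (disch := intro x; exact (hF x).ne')))
      (fun x _ => (hGd x).differentiableAt.differentiableWithinAt) ?_
    intro x hx
    rw [(hGd x).deriv]
    exact hG'nonneg x (le_of_lt (by simpa using hx))
  intro t ht
  have h0 : Real.log (F 0) = 0 := by simp [hFdef]
  have hmt : (0:ℝ) * p + 0 ^ 2 / 8 - Real.log (F 0) ≤ t * p + t ^ 2 / 8 - Real.log (F t) :=
    hGmono (Set.self_mem_Ici) (Set.mem_Ici.2 ht) ht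
  rw [h0] at hmt
  have hlog : Real.log (F t) ≤ t * p + t ^ 2 / 8 := by linarith
  calc F t = Real.exp (Real.log (F t)) := (Real.exp_log (hF t)).symm
    _ ≤ Real.exp (t * p + t ^ 2 / 8) := Real.exp_le_exp.2 hlog

lemma list_map_ind_sum {β : Type*} (l : List β) (p : β → Bool) :
    (l.map (fun x => if p x = true then 1 else 0)).sum = l.countP p := by
  induction l with
  | nil => simp
  | cons a l ih => by_cases h : p a <;> simp [List.countP_cons, h, ih, Nat.add_comm]

lemma list_countP_eq_filter_card {β : Type*} (l : List β) (p : β → Bool) :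
    (Finset.univ.filter (fun i : Fin l.length => p (l.get i) = true)).card = l.countP p := by
  rw [Finset.card_filter, Fin.sum_univ_def]
  have h2 : (List.finRange l.length).map (fun i => if p (l.get i) = true then 1 else 0)
      = l.map (fun x => if p x = true then 1 else 0) := by
    conv_rhs => rw [← List.map_get_finRange l]
    rw [List.map_map]
    rfl
  rw [h2, list_map_ind_sum]

lemma countP_finRange (s : ℕ) (q : Fin s → Bool) :
    (List.finRange s).countP q = (Finset.univ.filter (fun j : Fin s => q j = true)).card := by
  rw [Finset.card_filter, Fin.sum_univ_def, list_map_ind_sum]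

lemma chernoff_count {α : Type*} [Fintype α] (hα : 0 < Fintype.card α) (g : α → Bool)
    (s : ℕ) (ε : ℝ) (hε : 0 < ε) (B : Finset (Fin s → α))
    (hB : ∀ t ∈ B, (s : ℝ) *
        (((Finset.univ.filter (fun a => g a = true)).card : ℝ) / (Fintype.card α : ℝ) + ε)
        ≤ ((Finset.univ.filter (fun j : Fin s => g (t j) = true)).card : ℝ)) :
    (B.card : ℝ) ≤ (Fintype.card α : ℝ) ^ s * Real.exp (-(2 * ε ^ 2 * s)) := by
  classical
  set n := Fintype.card α with hn
  set m := (Finset.univ.filter (fun a => g a = true)).card with hm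
  set m' := (Finset.univ.filter (fun a => ¬ g a = true)).card with hm'
  have hmm' : m + m' = n := by
    rw [hm, hm', hn, ← Finset.card_univ]
    exact Finset.card_filter_add_card_filter_not _
  set lam : ℝ := 4 * ε with hlam
  have hlam0 : 0 ≤ lam := by positivity
  set p : ℝ := (m : ℝ) / n with hp
  have hn0 : (0:ℝ) < n := by exact_mod_cast hα
  have hp0 : 0 ≤ p := by positivity
  have hp1 : p ≤ 1 := by
    rw [hp, div_le_one hn0]
    exact_mod_cast Nat.le.intro hmm'
  set C : (Fin s → α) → ℕ := fun t => (Finset.univ.filter (fun j : Fin s => g (t j) = true)).card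
    with hC
  set w : α → ℝ := fun a => if g a = true then Real.exp lam else 1 with hw
  have hprod : ∀ t : Fin s → α, Real.exp (lam * C t) = ∏ j : Fin s, w (t j) := by
    intro t
    have h1 : ∏ j : Fin s, w (t j) = Real.exp lam ^ (C t) := by
      simp only [hw]
      rw [Finset.prod_ite, Finset.prod_const, Finset.prod_const, one_pow, mul_one]
    rw [h1, mul_comm, Real.exp_nat_mul]
  have hsum : ∑ t : Fin s → α, Real.exp (lam * C t) = ((m : ℝ) * Real.exp lam + m') ^ s := by
    have h2 : ∑ t : Fin s → α, ∏ j : Fin s, w (t j) = ∏ _j : Fin s, ∑ a : α, w a := by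
      rw [Finset.prod_univ_sum, Fintype.piFinset_univ]
    have h3 : ∑ a : α, w a = Real.exp lam * m + m' := by
      simp only [hw]
      rw [Finset.sum_ite, Finset.sum_const, Finset.sum_const]
      simp [hm, hm', mul_comm]
    calc ∑ t : Fin s → α, Real.exp (lam * C t) = ∑ t : Fin s → α, ∏ j : Fin s, w (t j) :=
          Finset.sum_congr rfl (fun t _ => hprod t)
      _ = ∏ _j : Fin s, ∑ a : α, w a := h2
      _ = ((m : ℝ) * Real.exp lam + m') ^ s := by rw [h3]; rw [Finset.prod_const]; ring_nf; simp [mul_comm]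
  -- base bound
  have hbase : (m : ℝ) * Real.exp lam + m' ≤ (n : ℝ) * Real.exp (lam * p + lam ^ 2 / 8) := by
    have h4 : (m : ℝ) * Real.exp lam + m' = n * (1 - p + p * Real.exp lam) := by
      have : (m' : ℝ) = (n : ℝ) - m := by
        have : (m : ℝ) + m' = n := by exact_mod_cast hmm'
        linarith
      rw [this, hp]
      field_simp
      ring
    rw [h4]
    exact mul_le_mul_of_nonneg_left (hoeff_aux p hp0 hp1 lam hlam0) (le_of_lt hn0)
  -- main chain
  have hchain : (B.card : ℝ) * Real.exp (lam * (s * (p + ε)))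
      ≤ (n : ℝ) ^ s * Real.exp (s * (lam * p + lam ^ 2 / 8)) := by
    calc (B.card : ℝ) * Real.exp (lam * (s * (p + ε)))
        = ∑ _t ∈ B, Real.exp (lam * (s * (p + ε))) := by
          rw [Finset.sum_const, nsmul_eq_mul]
      _ ≤ ∑ t ∈ B, Real.exp (lam * C t) := by
          refine Finset.sum_le_sum (fun t ht => Real.exp_le_exp.2 ?_)
          have := hB t ht
          have hple : (s : ℝ) * (p + ε) ≤ (C t : ℝ) := this
          nlinarith
      _ ≤ ∑ t : Fin s → α, Real.exp (lam * C t) :=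
          Finset.sum_le_sum_of_subset_of_nonneg (Finset.subset_univ B)
            (fun t _ _ => (Real.exp_pos _).le)
      _ = ((m : ℝ) * Real.exp lam + m') ^ s := hsum
      _ ≤ ((n : ℝ) * Real.exp (lam * p + lam ^ 2 / 8)) ^ s := by
          refine pow_le_pow_left₀ ?_ hbase s
          positivity
      _ = (n : ℝ) ^ s * Real.exp (s * (lam * p + lam ^ 2 / 8)) := by
          rw [mul_pow, ← Real.exp_nat_mul]
  have hEpos : (0:ℝ) < Real.exp (lam * (s * (p + ε))) := Real.exp_pos _
  rw [← le_div_iff₀ hEpos] at hchain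
  calc (B.card : ℝ) ≤ (n : ℝ) ^ s * Real.exp (s * (lam * p + lam ^ 2 / 8))
        / Real.exp (lam * (s * (p + ε))) := hchain
    _ = (n : ℝ) ^ s * Real.exp (s * (lam * p + lam ^ 2 / 8) - lam * (s * (p + ε))) := by
        rw [mul_div_assoc, Real.exp_sub]
    _ = (n : ℝ) ^ s * Real.exp (-(2 * ε ^ 2 * s)) := by
        congr 1
        congr 1
        rw [hlam]
        ring

lemma multisetFrac_coe {X : Type*} (f : X → Bool) (l : List X) :
    multisetFrac f ↑l = (l.countP f : ℝ) / (l.length : ℝ) := by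
  unfold multisetFrac
  congr 2
  rw [Multiset.coe_countP]
  simp

lemma multisetFrac_eq {X : Type*} (f : X → Bool) (D : Multiset X) :
    multisetFrac f D = (D.toList.countP f : ℝ) / (D.toList.length : ℝ) := by
  conv_lhs => rw [← Multiset.coe_toList D]
  exact multisetFrac_coe f D.toList

set_option maxHeartbeats 1000000 in
/-- **Existence part of Proposition 4 (uniform convergence).** For any nonempty database `D`
over a nonempty finite set `X`, any `k ≥ 1` predicates, any `ε ∈ (0,1)` and any positive
integer `s ≥ (1/(2ε²))·ln(4k)`, there is a multiset `S` over `X` of size `s` whose answers to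
all `k` predicate queries agree with those of `D` up to `± ε`. -/
theorem small_database_exists {X : Type*} [Fintype X] [Nonempty X]
    (D : Multiset X) (hD : D ≠ 0) (k : ℕ) (hk : 1 ≤ k) (f : Fin k → X → Bool)
    (ε : ℝ) (hε : 0 < ε ∧ ε < 1)
    (s : ℕ) (hs : 0 < s) (hs2 : (1 / (2 * ε ^ 2)) * Real.log (4 * k) ≤ (s : ℝ)) :
    ∃ S : Multiset X, Multiset.card S = s ∧
      ∀ i : Fin k, |multisetFrac (f i) D - multisetFrac (f i) S| ≤ ε := by
  classical
  obtain ⟨hε0, hε1⟩ := hε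
  obtain ⟨L, hLdef⟩ : ∃ l : List X, l = D.toList := ⟨D.toList, rfl⟩
  have hL0 : 0 < L.length := by
    rw [hLdef, Multiset.length_toList]
    exact Multiset.card_pos.2 hD
  have hLr : (0:ℝ) < (L.length : ℝ) := by exact_mod_cast hL0
  have hsr : (0:ℝ) < (s : ℝ) := by exact_mod_cast hs
  have hkr : (1:ℝ) ≤ (k : ℝ) := by exact_mod_cast hk
  obtain ⟨mi, hmiE⟩ : ∃ F : Fin k → ℕ, ∀ i, F i =
      (Finset.univ.filter (fun a : Fin L.length => f i (L.get a) = true)).card :=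
    ⟨_, fun _ => rfl⟩
  obtain ⟨mi', hmi'E⟩ : ∃ F : Fin k → ℕ, ∀ i, F i =
      (Finset.univ.filter (fun a : Fin L.length => f i (L.get a) = false)).card :=
    ⟨_, fun _ => rfl⟩
  obtain ⟨ci, hciE⟩ : ∃ F : Fin k → (Fin s → Fin L.length) → ℕ, ∀ i t, F i t =
      (Finset.univ.filter (fun j : Fin s => f i (L.get (t j)) = true)).card :=
    ⟨_, fun _ _ => rfl⟩
  obtain ⟨ci', hci'E⟩ : ∃ F : Fin k → (Fin s → Fin L.length) → ℕ, ∀ i t, F i t =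
      (Finset.univ.filter (fun j : Fin s => f i (L.get (t j)) = false)).card :=
    ⟨_, fun _ _ => rfl⟩
  have hfilter_not : ∀ {β : Type} [Fintype β] (h : β → Bool),
      (Finset.univ.filter (fun a : β => h a = false))
        = (Finset.univ.filter (fun a : β => ¬ (h a = true))) := by
    intro β _ h
    apply Finset.filter_congr
    intro a _
    simp
  have hmm : ∀ i, mi i + mi' i = L.length := by
    intro i
    rw [hmiE, hmi'E, hfilter_not]
    have := Finset.card_filter_add_card_filter_not
      (s := (Finset.univ : Finset (Fin L.length))) (p := fun a => f i (L.get a) = true)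
    simpa using this
  have hcc : ∀ i t, ci i t + ci' i t = s := by
    intro i t
    rw [hciE, hci'E, hfilter_not]
    have := Finset.card_filter_add_card_filter_not
      (s := (Finset.univ : Finset (Fin s))) (p := fun j => f i (L.get (t j)) = true)
    simpa using this
  -- bad sets
  obtain ⟨Badp, hBadpE⟩ : ∃ B : Fin k → Finset (Fin s → Fin L.length), ∀ i, B i =
      Finset.univ.filter (fun t => (s:ℝ) * ((mi i : ℝ)/(L.length : ℝ) + ε) ≤ (ci i t : ℝ)) :=
    ⟨_, fun _ => rfl⟩
  obtain ⟨Badm, hBadmE⟩ : ∃ B : Fin k → Finset (Fin s → Fin L.length), ∀ i, B i =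
      Finset.univ.filter (fun t => (s:ℝ) * ((mi' i : ℝ)/(L.length : ℝ) + ε) ≤ (ci' i t : ℝ)) :=
    ⟨_, fun _ => rfl⟩
  have hmemp : ∀ i t, t ∈ Badp i ↔
      (s:ℝ) * ((mi i : ℝ)/(L.length : ℝ) + ε) ≤ (ci i t : ℝ) := by
    intro i t; rw [hBadpE]; simp
  have hmemm : ∀ i t, t ∈ Badm i ↔
      (s:ℝ) * ((mi' i : ℝ)/(L.length : ℝ) + ε) ≤ (ci' i t : ℝ) := by
    intro i t; rw [hBadmE]; simp
  have hcardfin : 0 < Fintype.card (Fin L.length) := by simpa using hL0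
  have hBadp_card : ∀ i, ((Badp i).card : ℝ)
      ≤ (L.length : ℝ) ^ s * Real.exp (-(2 * ε ^ 2 * s)) := by
    intro i
    have := chernoff_count hcardfin (fun a => f i (L.get a)) s ε hε0 (Badp i)
      (fun t ht => by
        have h0 := (hmemp i t).1 ht
        rw [hmiE] at h0
        rw [hciE] at h0
        simpa [Fintype.card_fin] using h0)
    simpa [Fintype.card_fin] using this
  have hBadm_card : ∀ i, ((Badm i).card : ℝ)
      ≤ (L.length : ℝ) ^ s * Real.exp (-(2 * ε ^ 2 * s)) := by
    intro i
    have := chernoff_count hcardfin (fun a => ! f i (L.get a)) s ε hε0 (Badm i)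
      (fun t ht => by
        have h0 := (hmemm i t).1 ht
        rw [hmi'E] at h0
        rw [hci'E] at h0
        simpa [Fintype.card_fin] using h0)
    simpa [Fintype.card_fin] using this
  -- exponential bound
  have h4k : (0:ℝ) < 4 * k := by linarith
  have hexp : Real.exp (-(2 * ε ^ 2 * s)) ≤ 1 / (4 * k) := by
    have h2e : (0:ℝ) < 2 * ε ^ 2 := by positivity
    have hlog : Real.log (4 * k) ≤ 2 * ε ^ 2 * s := by
      have h5 := mul_le_mul_of_nonneg_left hs2 h2e.le
      calc Real.log (4 * k) = (2 * ε ^ 2) * ((1 / (2 * ε ^ 2)) * Real.log (4 * k)) := by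
            field_simp
        _ ≤ (2 * ε ^ 2) * s := h5
        _ = 2 * ε ^ 2 * s := by ring
    calc Real.exp (-(2 * ε ^ 2 * s)) ≤ Real.exp (-Real.log (4 * k)) :=
          Real.exp_le_exp.2 (by linarith)
      _ = 1 / (4 * k) := by rw [Real.exp_neg, Real.exp_log h4k, one_div]
  -- total bad count
  obtain ⟨BadAll, hBadAllE⟩ : ∃ B : Finset (Fin s → Fin L.length),
      B = Finset.univ.biUnion (fun i : Fin k => Badp i ∪ Badm i) := ⟨_, rfl⟩
  have hBadAll_card : (BadAll.card : ℝ) < (L.length : ℝ) ^ s := by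
    have h1 : BadAll.card ≤ ∑ i : Fin k, ((Badp i).card + (Badm i).card) := by
      rw [hBadAllE]
      refine le_trans (Finset.card_biUnion_le) (Finset.sum_le_sum (fun i _ => ?_))
      exact Finset.card_union_le _ _
    have h2 : (BadAll.card : ℝ) ≤ ∑ i : Fin k, (((Badp i).card : ℝ) + ((Badm i).card : ℝ)) := by
      exact_mod_cast h1
    have hLpow : (0:ℝ) < (L.length : ℝ) ^ s := by positivity
    have h3 : (BadAll.card : ℝ)
        ≤ (k : ℝ) * (2 * ((L.length : ℝ) ^ s * Real.exp (-(2 * ε ^ 2 * s)))) := by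
      refine le_trans h2 ?_
      calc ∑ i : Fin k, (((Badp i).card : ℝ) + ((Badm i).card : ℝ))
          ≤ ∑ _i : Fin k, 2 * ((L.length : ℝ) ^ s * Real.exp (-(2 * ε ^ 2 * s))) :=
            Finset.sum_le_sum (fun i _ => by
              have := hBadp_card i; have := hBadm_card i; linarith)
        _ = (k : ℝ) * (2 * ((L.length : ℝ) ^ s * Real.exp (-(2 * ε ^ 2 * s)))) := by
            rw [Finset.sum_const, Finset.card_univ, Fintype.card_fin, nsmul_eq_mul]
    have h4 : (k : ℝ) * (2 * ((L.length : ℝ) ^ s * Real.exp (-(2 * ε ^ 2 * s))))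
        ≤ (k : ℝ) * (2 * ((L.length : ℝ) ^ s * (1 / (4 * k)))) := by
      have hk0 : (0:ℝ) < k := by linarith
      have h6 := mul_le_mul_of_nonneg_left hexp hLpow.le
      nlinarith
    have h5 : (k : ℝ) * (2 * ((L.length : ℝ) ^ s * (1 / (4 * k)))) = (L.length : ℝ) ^ s / 2 := by
      have hk0 : (k : ℝ) ≠ 0 := by positivity
      field_simp
      ring
    calc (BadAll.card : ℝ)
        ≤ (k : ℝ) * (2 * ((L.length : ℝ) ^ s * Real.exp (-(2 * ε ^ 2 * s)))) := h3
      _ ≤ (k : ℝ) * (2 * ((L.length : ℝ) ^ s * (1 / (4 * k)))) := h4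
      _ = (L.length : ℝ) ^ s / 2 := h5
      _ < (L.length : ℝ) ^ s := by linarith
  -- existence of a good tuple
  have hex : ∃ t : Fin s → Fin L.length, t ∉ BadAll := by
    by_contra hcon
    push_neg at hcon
    have heq : BadAll = Finset.univ := Finset.eq_univ_iff_forall.2 hcon
    have hceq : (BadAll.card : ℝ) = (L.length : ℝ) ^ s := by
      rw [heq, Finset.card_univ, Fintype.card_fun]
      simp
    rw [hceq] at hBadAll_card
    exact lt_irrefl _ hBadAll_card
  obtain ⟨t, ht⟩ := hex
  have htgood : ∀ i : Fin k, t ∉ Badp i ∧ t ∉ Badm i := by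
    intro i
    constructor <;> intro hmem <;>
      exact ht (hBadAllE ▸ Finset.mem_biUnion.2 ⟨i, Finset.mem_univ i,
        Finset.mem_union.2 (by first | exact Or.inl hmem | exact Or.inr hmem)⟩)
  -- define S
  refine ⟨↑((List.finRange s).map (fun j => L.get (t j))), ?_, ?_⟩
  · simp
  intro i
  have hfracD : multisetFrac (f i) D = (mi i : ℝ) / (L.length : ℝ) := by
    rw [multisetFrac_eq, ← hLdef, hmiE, list_countP_eq_filter_card]
  have hcomp : ((f i) ∘ fun j : Fin s => L.get (t j)) = fun j : Fin s => f i (L.get (t j)) := rfl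
  have hfracS : multisetFrac (f i) ↑((List.finRange s).map (fun j => L.get (t j)))
      = (ci i t : ℝ) / (s : ℝ) := by
    rw [multisetFrac_coe, List.countP_map, List.length_map, List.length_finRange, hcomp,
      countP_finRange s (fun j => f i (L.get (t j))), hciE]
  rw [hfracD, hfracS]
  -- derive inequalities
  obtain ⟨hgp, hgm⟩ := htgood i
  rw [hmemp] at hgp
  rw [hmemm] at hgm
  push_neg at hgp hgm
  have hub : (ci i t : ℝ) < (s:ℝ) * ((mi i : ℝ)/(L.length : ℝ) + ε) := hgp
  have hmi'r : (mi' i : ℝ) = (L.length : ℝ) - (mi i : ℝ) := by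
    have h7 : (mi i : ℝ) + (mi' i : ℝ) = (L.length : ℝ) := by exact_mod_cast hmm i
    linarith
  have hci'r : (ci' i t : ℝ) = (s : ℝ) - (ci i t : ℝ) := by
    have h8 : (ci i t : ℝ) + (ci' i t : ℝ) = (s : ℝ) := by exact_mod_cast hcc i t
    linarith
  have hlb : (s:ℝ) * ((mi i : ℝ)/(L.length : ℝ) - ε) < (ci i t : ℝ) := by
    have h6 : (ci' i t : ℝ) < (s:ℝ) * ((mi' i : ℝ)/(L.length : ℝ) + ε) := hgm
    rw [hci'r, hmi'r] at h6
    have h7 : ((L.length : ℝ) - (mi i : ℝ)) / (L.length : ℝ)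
        = 1 - (mi i : ℝ)/(L.length : ℝ) := by field_simp
    rw [h7] at h6
    nlinarith
  rw [abs_le]
  constructor
  · rw [neg_le, neg_sub]
    have h9 : (ci i t : ℝ) / s < (mi i : ℝ)/(L.length : ℝ) + ε := by
      rw [div_lt_iff₀ hsr]
      nlinarith
    linarith
  · have h9 : (mi i : ℝ)/(L.length : ℝ) - ε < (ci i t : ℝ) / s := by
      rw [lt_div_iff₀ hsr]
      nlinarith
    linarith
end

section
/- Let C be a nonempty finite set, g : C → ℝ, and let ε > 0 and n > 0 be real numbers with ε·n ≥ 1. For x ∈ ℝ define r(x) = (1/#C)·∑_{S ∈ C} exp(−|x − g(S)|/ε). Then for all x, x′ ∈ ℝ with |x − x′| ≤ 1/n, we have r(x) ≤ r(x′) + 2/(ε n). In particular the function r has sensitivity at most 2/(ε n) with respect to changes of its argument by at most 1/n. -/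
lemma exp_le_one_add_two_mul' {u : ℝ} (h0 : 0 ≤ u) (h1 : u ≤ 1) :
    Real.exp u ≤ 1 + 2 * u := by
  have hconv := convexOn_exp.2 (Set.mem_univ (0:ℝ)) (Set.mem_univ (1:ℝ))
    (by linarith : (0:ℝ) ≤ 1 - u) h0 (by ring)
  simp only [smul_eq_mul, mul_zero, mul_one, add_zero, Real.exp_zero, zero_add] at hconv
  have he : Real.exp 1 < 2.7182818286 := Real.exp_one_lt_d9
  nlinarith

/-- **Lemma 7 (sensitivityLemma).** For a nonempty finite set `C`, `g : C → ℝ`, and reals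
`ε > 0`, `n > 0` with `ε·n ≥ 1`, the function `r x = (1/#C) · ∑_{S∈C} exp(−|x − g S|/ε)`
has sensitivity at most `2/(εn)` with respect to changes of its argument by at most `1/n`:
if `|x − x′| ≤ 1/n` then `r x ≤ r x′ + 2/(εn)`. -/
theorem median_mechanism_score_sensitivity {α : Type*} (C : Finset α) (hC : C.Nonempty)
    (g : α → ℝ) (ε n : ℝ) (hε : 0 < ε) (hn : 0 < n) (hεn : 1 ≤ ε * n)
    (x x' : ℝ) (hxx' : |x - x'| ≤ 1 / n) :
    (1 / (C.card : ℝ)) * ∑ S ∈ C, Real.exp (-|x - g S| / ε) ≤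
      (1 / (C.card : ℝ)) * ∑ S ∈ C, Real.exp (-|x' - g S| / ε) + 2 / (ε * n) := by
  set u : ℝ := 1 / (ε * n) with hu
  have hεn0 : 0 < ε * n := mul_pos hε hn
  have hu0 : 0 ≤ u := by positivity
  have hu1 : u ≤ 1 := by rw [hu, div_le_one hεn0]; linarith
  have hcard : (0:ℝ) < C.card := by exact_mod_cast Finset.card_pos.mpr hC
  have hux : |x - x'| ≤ u * ε := by
    rw [hu]
    calc |x - x'| ≤ 1 / n := hxx'
      _ = 1 / (ε * n) * ε := by field_simp
  have hterm : ∀ S ∈ C, Real.exp (-|x - g S| / ε) ≤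
      Real.exp u * Real.exp (-|x' - g S| / ε) := by
    intro S _
    rw [← Real.exp_add]
    apply Real.exp_le_exp.mpr
    have htri : |x' - g S| - |x - g S| ≤ |x - x'| := by
      calc |x' - g S| - |x - g S| ≤ |(x' - g S) - (x - g S)| :=
            abs_sub_abs_le_abs_sub _ _
        _ = |x - x'| := by rw [show (x' - g S) - (x - g S) = -(x - x') by ring, abs_neg]
    have h2 : -|x - g S| / ε ≤ (u * ε + -|x' - g S|) / ε := by
      apply (div_le_div_iff_of_pos_right hε).mpr
      linarith
    calc -|x - g S| / ε ≤ (u * ε + -|x' - g S|) / ε := h2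
      _ = u + -|x' - g S| / ε := by field_simp
  have hsum : ∑ S ∈ C, Real.exp (-|x - g S| / ε) ≤
      Real.exp u * ∑ S ∈ C, Real.exp (-|x' - g S| / ε) := by
    rw [Finset.mul_sum]
    exact Finset.sum_le_sum hterm
  set r' : ℝ := (1 / (C.card : ℝ)) * ∑ S ∈ C, Real.exp (-|x' - g S| / ε) with hr'
  have hr'0 : 0 ≤ r' := by
    apply mul_nonneg (by positivity)
    exact Finset.sum_nonneg fun S _ => (Real.exp_pos _).le
  have hr'1 : r' ≤ 1 := by
    rw [hr', one_div, inv_mul_le_iff₀ hcard, mul_one]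
    calc ∑ S ∈ C, Real.exp (-|x' - g S| / ε) ≤ ∑ S ∈ C, (1:ℝ) := by
          apply Finset.sum_le_sum
          intro S _
          rw [← Real.exp_zero]
          apply Real.exp_le_exp.mpr
          have : 0 ≤ |x' - g S| / ε := by positivity
          rw [neg_div]
          linarith
      _ = C.card := by simp
  have hr : (1 / (C.card : ℝ)) * ∑ S ∈ C, Real.exp (-|x - g S| / ε) ≤ Real.exp u * r' := by
    rw [hr']
    calc (1 / (C.card : ℝ)) * ∑ S ∈ C, Real.exp (-|x - g S| / ε)
        ≤ (1 / (C.card : ℝ)) * (Real.exp u * ∑ S ∈ C, Real.exp (-|x' - g S| / ε)) :=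
          mul_le_mul_of_nonneg_left hsum (by positivity)
      _ = Real.exp u * ((1 / (C.card : ℝ)) * ∑ S ∈ C, Real.exp (-|x' - g S| / ε)) := by ring
  have hexp : Real.exp u ≤ 1 + 2 * u := exp_le_one_add_two_mul' hu0 hu1
  have h2u : 2 / (ε * n) = 2 * u := by rw [hu]; ring
  calc (1 / (C.card : ℝ)) * ∑ S ∈ C, Real.exp (-|x - g S| / ε)
      ≤ Real.exp u * r' := hr
    _ ≤ (1 + 2 * u) * r' := mul_le_mul_of_nonneg_right hexp hr'0
    _ = r' + 2 * u * r' := by ring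
    _ ≤ r' + 2 * u := by nlinarith
    _ = r' + 2 / (ε * n) := by rw [h2u]
end

section
/- Let X be a finite set with N = |X| ≥ 2, let D be a nonempty finite multiset over X, let f_1,…,f_k : X → {0,1} be predicates with k ≥ 1, let ε ∈ (0,1), and let m be a positive integer with m ≥ (80000/ε²)·ln(4k). Let C_0 be the set of all multisets of size m over X. Let H ⊆ {1,…,k} be a set of 'hard' indices and for each i ∈ H let a_i ∈ ℝ satisfy |f_i(D) − a_i| ≤ ε/100. Define inductively C_i = {S ∈ C_{i−1} : |f_i(S) − a_i| ≤ ε/50} for i ∈ H and C_i = C_{i−1} for i ∉ H. Assume that for every i ∈ H, (1/#C_{i−1})·∑_{S ∈ C_{i−1}} exp(−|f_i(D) − f_i(S)|/ε) < 91/100. Then #H < 20·m·ln N. -/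
open Finset

/-! ### Auxiliary lemmas -/

lemma aux_exp_le_one_add_add_sq {u : ℝ} (hu : |u| ≤ 1) : Real.exp u ≤ 1 + u + u ^ 2 := by
  have h := Real.exp_bound hu (n := 2) (by norm_num)
  have h2 : ∑ i ∈ Finset.range 2, u ^ i / (Nat.factorial i) = 1 + u := by
    simp [Finset.sum_range_succ]
  rw [h2] at h
  have h3 := le_trans (le_abs_self _) h
  have h4 : |u| ^ 2 = u ^ 2 := sq_abs u
  rw [h4] at h3
  norm_num [Nat.factorial] at h3
  nlinarith [sq_nonneg u]

/-- Elementary Chernoff tail bound over the product space `Fin m → X`, with integer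
weights `w` (the counting measure of a multiset). -/
lemma aux_tail_bound {X : Type*} [Fintype X] (m : ℕ) (w : X → ℕ) (g : X → ℝ)
    (h0 : ∑ x : X, (w x : ℝ) * g x = 0) (h1 : ∀ x, |g x| ≤ 1)
    (h2 : ∑ x : X, (w x : ℝ) * g x ^ 2 ≤ (∑ x : X, (w x : ℝ)) / 4)
    (t : ℝ) (ht : 0 < t) (ht2 : t ≤ 1 / 2) :
    ∑ ω ∈ Finset.univ.filter (fun ω : Fin m → X => (m : ℝ) * t ≤ ∑ j, g (ω j)),
        ∏ j, (w (ω j) : ℝ)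
      ≤ Real.exp (-((m : ℝ) * t ^ 2)) * (∑ x : X, (w x : ℝ)) ^ m := by
  set n : ℝ := ∑ x : X, (w x : ℝ) with hn
  have hn0 : 0 ≤ n := Finset.sum_nonneg fun x _ => by positivity
  have hterm : ∀ x : X, Real.exp (2 * t * g x) ≤ 1 + 2 * t * g x + (2 * t) ^ 2 * g x ^ 2 := by
    intro x
    have habs : |2 * t * g x| ≤ 1 := by
      rw [abs_mul]
      have h1x := h1 x
      have : |2 * t| = 2 * t := abs_of_pos (by linarith)
      rw [this]
      nlinarith [abs_nonneg (g x)]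
    have := aux_exp_le_one_add_add_sq habs
    nlinarith []
  have hmgf : ∑ x : X, (w x : ℝ) * Real.exp (2 * t * g x) ≤ n * Real.exp (t ^ 2) := by
    have step1 : ∑ x : X, (w x : ℝ) * Real.exp (2 * t * g x)
        ≤ ∑ x : X, ((w x : ℝ) + (2 * t) * ((w x : ℝ) * g x) + (2*t)^2 * ((w x : ℝ) * g x ^ 2)) := by
      apply Finset.sum_le_sum
      intro x _
      have hw : (0:ℝ) ≤ (w x : ℝ) := Nat.cast_nonneg _
      nlinarith [hterm x]
    have step2 : ∑ x : X, ((w x : ℝ) + (2 * t) * ((w x : ℝ) * g x) + (2*t)^2 * ((w x : ℝ) * g x ^ 2))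
        = n + (2*t) * (∑ x : X, (w x : ℝ) * g x) + (2*t)^2 * (∑ x : X, (w x : ℝ) * g x ^ 2) := by
      rw [Finset.sum_add_distrib, Finset.sum_add_distrib, Finset.mul_sum, Finset.mul_sum]
    have step4 : n * (1 + t ^ 2) ≤ n * Real.exp (t ^ 2) := by
      apply mul_le_mul_of_nonneg_left _ hn0
      have := Real.add_one_le_exp (t ^ 2)
      linarith
    calc ∑ x : X, (w x : ℝ) * Real.exp (2 * t * g x) ≤ _ := step1
      _ = _ := step2
      _ ≤ n * (1 + t^2) := by rw [h0] at *; nlinarith [h2]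
      _ ≤ n * Real.exp (t ^ 2) := step4
  have key : ∀ ω : Fin m → X, (m : ℝ) * t ≤ ∑ j, g (ω j) →
      ∏ j, (w (ω j) : ℝ) ≤ Real.exp (-(2 * (m : ℝ) * t ^ 2)) * ∏ j, ((w (ω j) : ℝ) * Real.exp (2 * t * g (ω j))) := by
    intro ω hω
    have hprod : ∏ j, ((w (ω j) : ℝ) * Real.exp (2 * t * g (ω j)))
        = (∏ j, (w (ω j) : ℝ)) * Real.exp (2 * t * ∑ j, g (ω j)) := by
      rw [Finset.prod_mul_distrib, ← Real.exp_sum]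
      congr 1
      rw [Finset.mul_sum]
    rw [hprod]
    have hWnn : (0:ℝ) ≤ ∏ j, (w (ω j) : ℝ) := Finset.prod_nonneg fun j _ => Nat.cast_nonneg _
    have hexp : Real.exp (2 * (m:ℝ) * t ^ 2) ≤ Real.exp (2 * t * ∑ j, g (ω j)) := by
      apply Real.exp_le_exp.2
      nlinarith
    have := mul_le_mul_of_nonneg_left hexp hWnn

    have hpos := Real.exp_pos (-(2 * (m:ℝ) * t ^ 2))
    calc ∏ j, (w (ω j) : ℝ)
        = Real.exp (-(2 * (m:ℝ) * t ^ 2)) * ((∏ j, (w (ω j) : ℝ)) * Real.exp (2 * (m:ℝ) * t ^ 2)) := by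
          rw [← mul_assoc, mul_comm (Real.exp _), mul_assoc, ← Real.exp_add]
          simp
      _ ≤ Real.exp (-(2 * (m:ℝ) * t ^ 2)) * ((∏ j, (w (ω j) : ℝ)) * Real.exp (2 * t * ∑ j, g (ω j))) := by
          apply mul_le_mul_of_nonneg_left _ (le_of_lt hpos)
          exact mul_le_mul_of_nonneg_left hexp hWnn
  have chain : ∑ ω ∈ Finset.univ.filter (fun ω : Fin m → X => (m : ℝ) * t ≤ ∑ j, g (ω j)),
        ∏ j, (w (ω j) : ℝ)
      ≤ Real.exp (-(2 * (m : ℝ) * t ^ 2)) * ∑ ω : Fin m → X, ∏ j, ((w (ω j) : ℝ) * Real.exp (2 * t * g (ω j))) := by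
    rw [Finset.mul_sum]
    calc ∑ ω ∈ Finset.univ.filter (fun ω : Fin m → X => (m : ℝ) * t ≤ ∑ j, g (ω j)), ∏ j, (w (ω j) : ℝ)
        ≤ ∑ ω ∈ Finset.univ.filter (fun ω : Fin m → X => (m : ℝ) * t ≤ ∑ j, g (ω j)),
            Real.exp (-(2 * (m : ℝ) * t ^ 2)) * ∏ j, ((w (ω j) : ℝ) * Real.exp (2 * t * g (ω j))) := by
          apply Finset.sum_le_sum
          intro ω hω
          exact key ω (Finset.mem_filter.1 hω).2
      _ ≤ ∑ ω : Fin m → X, Real.exp (-(2 * (m : ℝ) * t ^ 2)) * ∏ j, ((w (ω j) : ℝ) * Real.exp (2 * t * g (ω j))) := by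
          apply Finset.sum_le_sum_of_subset_of_nonneg (Finset.filter_subset _ _)
          intro ω _ _
          positivity
  have hid : ∑ ω : Fin m → X, ∏ j, ((w (ω j) : ℝ) * Real.exp (2 * t * g (ω j)))
      = (∑ x : X, (w x : ℝ) * Real.exp (2 * t * g x)) ^ m := by
    rw [Fintype.sum_pow (fun x : X => (w x : ℝ) * Real.exp (2 * t * g x)) m]
  have hpowle : (∑ x : X, (w x : ℝ) * Real.exp (2 * t * g x)) ^ m ≤ (n * Real.exp (t ^ 2)) ^ m := by
    apply pow_le_pow_left₀ _ hmgf
    exact Finset.sum_nonneg fun x _ => by positivity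
  calc ∑ ω ∈ Finset.univ.filter (fun ω : Fin m → X => (m : ℝ) * t ≤ ∑ j, g (ω j)), ∏ j, (w (ω j) : ℝ)
      ≤ Real.exp (-(2 * (m : ℝ) * t ^ 2)) * (∑ x : X, (w x : ℝ) * Real.exp (2 * t * g x)) ^ m := by
        rw [← hid]; exact chain
    _ ≤ Real.exp (-(2 * (m : ℝ) * t ^ 2)) * (n * Real.exp (t ^ 2)) ^ m := by
        exact mul_le_mul_of_nonneg_left hpowle (le_of_lt (Real.exp_pos _))
    _ = Real.exp (-((m : ℝ) * t ^ 2)) * n ^ m := by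
        rw [mul_pow, ← Real.exp_nat_mul]
        rw [← mul_assoc, mul_comm (Real.exp _) (n ^ m)]
        rw [mul_assoc, ← Real.exp_add]
        ring_nf

lemma aux_sum_biUnion_le_nonneg {ι α : Type*} [DecidableEq α] (s : Finset ι) (t : ι → Finset α)
    (f : α → ℝ) (hf : ∀ x, 0 ≤ f x) :
    ∑ x ∈ s.biUnion t, f x ≤ ∑ i ∈ s, ∑ x ∈ t i, f x := by
  classical
  induction s using Finset.induction with
  | empty => simp
  | @insert a s ha ih =>
    rw [Finset.biUnion_insert, Finset.sum_insert ha]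
    have hunion : ∑ x ∈ t a ∪ s.biUnion t, f x
        ≤ ∑ x ∈ t a, f x + ∑ x ∈ s.biUnion t, f x := by
      rw [← Finset.union_sdiff_self_eq_union, Finset.sum_union Finset.disjoint_sdiff]
      have : ∑ x ∈ s.biUnion t \ t a, f x ≤ ∑ x ∈ s.biUnion t, f x :=
        Finset.sum_le_sum_of_subset_of_nonneg (Finset.sdiff_subset) (fun x _ _ => hf x)
      linarith
    linarith [ih]

lemma aux_card_eq_sum_count {X : Type*} [Fintype X] [DecidableEq X] (s : Multiset X) :
    Multiset.card s = ∑ x : X, s.count x := by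
  rw [← Multiset.toFinset_sum_count_eq]
  apply Finset.sum_subset (Finset.subset_univ _)
  intro x _ hx
  simpa [Multiset.count_eq_zero] using hx

lemma aux_countP_eq_sum_count {X : Type*} [Fintype X] [DecidableEq X] (s : Multiset X)
    (p : X → Prop) [DecidablePred p] :
    s.countP p = ∑ x : X, (if p x then s.count x else 0) := by
  rw [Multiset.countP_eq_card_filter, aux_card_eq_sum_count]
  exact Finset.sum_congr rfl fun x _ => Multiset.count_filter

lemma aux_coe_eq_map {X : Type*} (l : List X) (m : ℕ) (h : l.length = m) :
    (l : Multiset X) = Multiset.map (fun j : Fin m => l.get (Fin.cast h.symm j)) Finset.univ.val := by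
  subst h
  simp only [Fin.cast_refl]
  have h2 : (Finset.univ.val : Multiset (Fin l.length)) = ↑(List.finRange l.length) := rfl
  rw [h2, Multiset.map_coe]
  congr 1
  exact (List.map_get_finRange l).symm

set_option maxHeartbeats 1000000 in
/-- **Deterministic content of Lemma 8 (fewDiscounts).** Queries are indexed by `1,…,k`;
`H ⊆ {1,…,k}` is the set of hard queries, each answered `(ε/100)`-accurately by `a i`.
`C 0` is the set of all multisets of size `m` over `X`, and for `i ∈ {1,…,k}` the set `C i`
consists of those members of `C (i−1)` that are `(ε/50)`-consistent with `a i` when `i` is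
hard, and `C i = C (i−1)` otherwise.  If every hard query has easiness score
`(1/#C_{i−1}) · ∑_{S ∈ C_{i−1}} exp(−|f_i(D) − f_i(S)|/ε) < 91/100`, then the number of hard
queries is less than `20·m·ln |X|`. -/
theorem few_hard_queries {X : Type*} [Fintype X] (hN : 2 ≤ Fintype.card X)
    (D : Multiset X) (hD : D ≠ 0)
    (k : ℕ) (hk : 1 ≤ k) (f : ℕ → X → Bool)
    (ε : ℝ) (hε : 0 < ε ∧ ε < 1)
    (m : ℕ) (hm : 0 < m) (hm2 : (80000 / ε ^ 2) * Real.log (4 * k) ≤ (m : ℝ))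
    (H : Finset ℕ) (hH : H ⊆ Finset.Icc 1 k)
    (a : ℕ → ℝ) (ha : ∀ i ∈ H, |multisetFrac (f i) D - a i| ≤ ε / 100)
    (C : ℕ → Finset (Multiset X))
    (hC0 : ∀ S : Multiset X, S ∈ C 0 ↔ Multiset.card S = m)
    (hCstep : ∀ i ∈ Finset.Icc 1 k, ∀ S : Multiset X,
      S ∈ C i ↔ S ∈ C (i - 1) ∧ (i ∈ H → |multisetFrac (f i) S - a i| ≤ ε / 50))
    (hscore : ∀ i ∈ H,
      (1 / ((C (i - 1)).card : ℝ)) *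
          ∑ S ∈ C (i - 1), Real.exp (-|multisetFrac (f i) D - multisetFrac (f i) S| / ε)
        < 91 / 100) :
    (H.card : ℝ) < 20 * (m : ℝ) * Real.log (Fintype.card X) := by
  classical
  obtain ⟨hε0, hε1⟩ := hε
  have hm0 : (0:ℝ) < m := by exact_mod_cast hm
  have hN1 : (1:ℝ) < Fintype.card X := by
    have : (2:ℝ) ≤ Fintype.card X := by exact_mod_cast hN
    linarith
  have hlogN : 0 < Real.log (Fintype.card X) := Real.log_pos hN1
  set t : ℝ := ε / 100 with ht_def
  have ht : 0 < t := by positivity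
  have ht2 : t ≤ 1 / 2 := by rw [ht_def]; linarith
  -- the database size
  have hnn : 0 < Multiset.card D := Multiset.card_pos.2 hD
  set n : ℝ := (Multiset.card D : ℝ) with hn_def
  have hn1 : 1 ≤ n := by rw [hn_def]; exact_mod_cast hnn
  have hn0 : (0:ℝ) < n := by linarith
  -- weights
  set w : X → ℕ := fun x => D.count x with hw_def
  have hsumw : ∑ x : X, (w x : ℝ) = n := by
    rw [hn_def, ← Nat.cast_sum]
    exact_mod_cast congrArg (Nat.cast : ℕ → ℝ) (aux_card_eq_sum_count D).symm
  -- fractions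
  have hp01 : ∀ i, 0 ≤ multisetFrac (f i) D ∧ multisetFrac (f i) D ≤ 1 := by
    intro i
    constructor
    · apply div_nonneg <;> positivity
    · rw [multisetFrac, div_le_one hn0, hn_def]
      exact_mod_cast Multiset.countP_le_card _ _
  have hcount : ∀ i, (D.countP (fun x => f i x = true) : ℝ)
      = ∑ x : X, (w x : ℝ) * (if f i x = true then (1:ℝ) else 0) := by
    intro i
    rw [aux_countP_eq_sum_count D (fun x => f i x = true), Nat.cast_sum]
    apply Finset.sum_congr rfl
    intro x _
    split_ifs <;> simp [hw_def]
  have hp_eq : ∀ i, (D.countP (fun x => f i x = true) : ℝ) = n * multisetFrac (f i) D := by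
    intro i
    rw [multisetFrac, ← hn_def]
    field_simp
  -- the centred indicator functions
  set g : ℕ → X → ℝ := fun i x => (if f i x = true then (1:ℝ) else 0) - multisetFrac (f i) D
    with hg_def
  have h0g : ∀ i, ∑ x : X, (w x : ℝ) * g i x = 0 := by
    intro i
    have : ∀ x : X, (w x : ℝ) * g i x
        = (w x : ℝ) * (if f i x = true then (1:ℝ) else 0) - (w x : ℝ) * multisetFrac (f i) D := by
      intro x; rw [hg_def]; ring
    rw [Finset.sum_congr rfl (fun x _ => this x), Finset.sum_sub_distrib, ← Finset.sum_mul,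
      hsumw, ← hcount i, hp_eq i, sub_self]
  have h1g : ∀ i, ∀ x, |g i x| ≤ 1 := by
    intro i x
    obtain ⟨hp0, hp1⟩ := hp01 i
    rw [hg_def, abs_le]
    dsimp only
    split_ifs <;> constructor <;> linarith
  have h2g : ∀ i, ∑ x : X, (w x : ℝ) * g i x ^ 2 ≤ (∑ x : X, (w x : ℝ)) / 4 := by
    intro i
    set p : ℝ := multisetFrac (f i) D with hp_def
    obtain ⟨hp0, hp1⟩ := hp01 i
    have expand : ∑ x : X, (w x : ℝ) * g i x ^ 2
        = (∑ x : X, (w x : ℝ) * (if f i x = true then (1:ℝ) else 0)) * (1 - 2 * p)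
          + (∑ x : X, (w x : ℝ)) * p ^ 2 := by
      rw [Finset.sum_mul, Finset.sum_mul, ← Finset.sum_add_distrib]
      apply Finset.sum_congr rfl
      intro x _
      rw [hg_def]
      dsimp only
      split_ifs <;> ring
    rw [expand, ← hcount i, hp_eq i, hsumw, ← hp_def]
    nlinarith [sq_nonneg (1 - 2 * p)]
  -- tail bound for each hard query, both tails
  have htail : ∀ i : ℕ,
      ∑ ω ∈ Finset.univ.filter (fun ω : Fin m → X => (m : ℝ) * t ≤ |∑ j, g i (ω j)|),
          ∏ j, (w (ω j) : ℝ)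
        ≤ 2 * Real.exp (-((m : ℝ) * t ^ 2)) * n ^ m := by
    intro i
    have hup := aux_tail_bound m w (g i) (h0g i) (h1g i) (h2g i) t ht ht2
    have hdown := aux_tail_bound m w (fun x => -g i x)
      (by rw [← neg_eq_zero, ← h0g i, ← Finset.sum_neg_distrib]; apply Finset.sum_congr rfl
          intro x _; ring)
      (fun x => by rw [abs_neg]; exact h1g i x)
      (by calc ∑ x : X, (w x : ℝ) * (-g i x) ^ 2 = ∑ x : X, (w x : ℝ) * g i x ^ 2 := by
                apply Finset.sum_congr rfl; intro x _; ring
            _ ≤ _ := h2g i)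
      t ht ht2
    rw [hsumw] at hup hdown
    set A := Finset.univ.filter (fun ω : Fin m → X => (m : ℝ) * t ≤ ∑ j, g i (ω j)) with hA
    set B := Finset.univ.filter (fun ω : Fin m → X => (m : ℝ) * t ≤ ∑ j, (-g i (ω j))) with hB
    have hsubset : Finset.univ.filter (fun ω : Fin m → X => (m : ℝ) * t ≤ |∑ j, g i (ω j)|)
        ⊆ A ∪ B := by
      intro ω hω
      have h := (Finset.mem_filter.1 hω).2
      rcases abs_le.1 (le_refl |∑ j, g i (ω j)|) with _
      rcases le_or_gt ((m:ℝ) * t) (∑ j, g i (ω j)) with hc | hc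
      · exact Finset.mem_union_left _ (Finset.mem_filter.2 ⟨Finset.mem_univ _, hc⟩)
      · apply Finset.mem_union_right
        apply Finset.mem_filter.2 ⟨Finset.mem_univ _, ?_⟩
        rw [Finset.sum_neg_distrib]
        rcases abs_cases (∑ j, g i (ω j)) with ⟨he, _⟩ | ⟨he, _⟩
        · rw [he] at h; linarith
        · rw [he] at h; linarith
    have hWnn : ∀ ω : Fin m → X, (0:ℝ) ≤ ∏ j, (w (ω j) : ℝ) :=
      fun ω => Finset.prod_nonneg fun j _ => Nat.cast_nonneg _
    calc ∑ ω ∈ Finset.univ.filter (fun ω : Fin m → X => (m : ℝ) * t ≤ |∑ j, g i (ω j)|),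
            ∏ j, (w (ω j) : ℝ)
        ≤ ∑ ω ∈ A ∪ B, ∏ j, (w (ω j) : ℝ) :=
          Finset.sum_le_sum_of_subset_of_nonneg hsubset (fun ω _ _ => hWnn ω)
      _ ≤ (∑ ω ∈ A, ∏ j, (w (ω j) : ℝ)) + ∑ ω ∈ B, ∏ j, (w (ω j) : ℝ) := by
          rw [← Finset.union_sdiff_self_eq_union, Finset.sum_union Finset.disjoint_sdiff]
          have : ∑ ω ∈ B \ A, ∏ j, (w (ω j) : ℝ) ≤ ∑ ω ∈ B, ∏ j, (w (ω j) : ℝ) :=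
            Finset.sum_le_sum_of_subset_of_nonneg (Finset.sdiff_subset) (fun ω _ _ => hWnn ω)
          linarith
      _ ≤ Real.exp (-((m : ℝ) * t ^ 2)) * n ^ m + Real.exp (-((m : ℝ) * t ^ 2)) * n ^ m := by
          apply add_le_add hup hdown
      _ = 2 * Real.exp (-((m : ℝ) * t ^ 2)) * n ^ m := by ring
  -- the exponential is small
  have hk4 : (1:ℝ) < 4 * k := by
    have : (1:ℝ) ≤ k := by exact_mod_cast hk
    linarith
  have hexp_small : Real.exp (-((m : ℝ) * t ^ 2)) ≤ 1 / (4 * k) := by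
    have hL0 : 0 ≤ Real.log (4 * k) := Real.log_nonneg (le_of_lt hk4)
    have hL : Real.log (4 * k) ≤ (m : ℝ) * t ^ 2 := by
      have h8 := mul_le_mul_of_nonneg_right hm2
        (le_of_lt (show (0:ℝ) < ε ^ 2 / 80000 by positivity))
      have hε2 : ε ^ 2 ≠ 0 := by positivity
      have hls : (80000 / ε ^ 2 * Real.log (4 * k)) * (ε ^ 2 / 80000) = Real.log (4 * k) := by
        field_simp
      rw [hls] at h8
      calc Real.log (4 * k) ≤ (m : ℝ) * (ε ^ 2 / 80000) := h8
        _ ≤ (m : ℝ) * t ^ 2 := by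
            apply mul_le_mul_of_nonneg_left _ (le_of_lt hm0)
            rw [ht_def]
            nlinarith [sq_nonneg ε]
    calc Real.exp (-((m : ℝ) * t ^ 2)) ≤ Real.exp (-(Real.log (4 * k))) :=
          Real.exp_le_exp.2 (neg_le_neg hL)
      _ = 1 / (4 * k) := by
          rw [Real.exp_neg, Real.exp_log (by linarith)]
          rw [one_div]
  have hHk : (H.card : ℝ) ≤ k := by
    have h1 := Finset.card_le_card hH
    rw [Nat.card_Icc] at h1
    have : H.card ≤ k := by omega
    exact_mod_cast this
  -- existence of a good sample
  have hG : ∃ ω : Fin m → X, ∀ i ∈ H, |∑ j, g i (ω j)| < (m : ℝ) * t := by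
    by_contra hcon
    push_neg at hcon
    have hWnn : ∀ ω : Fin m → X, (0:ℝ) ≤ ∏ j, (w (ω j) : ℝ) :=
      fun ω => Finset.prod_nonneg fun j _ => Nat.cast_nonneg _
    have hWtotal : ∑ ω : Fin m → X, ∏ j, (w (ω j) : ℝ) = n ^ m := by
      rw [← Fintype.sum_pow (fun x : X => (w x : ℝ)) m, hsumw]
    have hcover : (Finset.univ : Finset (Fin m → X))
        ⊆ H.biUnion (fun i => Finset.univ.filter
            (fun ω : Fin m → X => (m : ℝ) * t ≤ |∑ j, g i (ω j)|)) := by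
      intro ω _
      obtain ⟨i, hiH, hi⟩ := hcon ω
      exact Finset.mem_biUnion.2 ⟨i, hiH, Finset.mem_filter.2 ⟨Finset.mem_univ _, hi⟩⟩
    have hstep : n ^ m ≤ ∑ i ∈ H, (2 * Real.exp (-((m : ℝ) * t ^ 2)) * n ^ m) := by
      calc n ^ m = ∑ ω : Fin m → X, ∏ j, (w (ω j) : ℝ) := hWtotal.symm
        _ ≤ ∑ ω ∈ H.biUnion (fun i => Finset.univ.filter
              (fun ω : Fin m → X => (m : ℝ) * t ≤ |∑ j, g i (ω j)|)), ∏ j, (w (ω j) : ℝ) :=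
            Finset.sum_le_sum_of_subset_of_nonneg hcover (fun ω _ _ => hWnn ω)
        _ ≤ ∑ i ∈ H, ∑ ω ∈ Finset.univ.filter
              (fun ω : Fin m → X => (m : ℝ) * t ≤ |∑ j, g i (ω j)|), ∏ j, (w (ω j) : ℝ) :=
            aux_sum_biUnion_le_nonneg _ _ _ hWnn
        _ ≤ ∑ i ∈ H, (2 * Real.exp (-((m : ℝ) * t ^ 2)) * n ^ m) :=
            Finset.sum_le_sum (fun i _ => htail i)
    rw [Finset.sum_const, nsmul_eq_mul] at hstep
    have hnm : (1:ℝ) ≤ n ^ m := one_le_pow₀ hn1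
    have hexp_nonneg : 0 < Real.exp (-((m : ℝ) * t ^ 2)) := Real.exp_pos _
    have hcard_exp : (H.card : ℝ) * (2 * Real.exp (-((m : ℝ) * t ^ 2)) * n ^ m)
        ≤ (k : ℝ) * (2 * (1 / (4 * k)) * n ^ m) := by
      apply mul_le_mul hHk _ (by positivity) (by positivity)
      apply mul_le_mul_of_nonneg_right _ (by positivity)
      linarith [hexp_small]
    have hkR : (0:ℝ) < k := by linarith
    have : (k : ℝ) * (2 * (1 / (4 * k)) * n ^ m) = n ^ m / 2 := by
      field_simp
      ring
    rw [this] at hcard_exp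
    nlinarith
  obtain ⟨ω, hω⟩ := hG
  -- the good sample multiset
  set Sstar : Multiset X := Multiset.map ω Finset.univ.val with hSstar_def
  have hScard : Multiset.card Sstar = m := by
    rw [hSstar_def, Multiset.card_map]
    simp
  have hSfrac : ∀ i ∈ H, |multisetFrac (f i) Sstar - multisetFrac (f i) D| ≤ ε / 100 := by
    intro i hiH
    have hgsum : ∑ j, g i (ω j)
        = (Sstar.countP (fun x => f i x = true) : ℝ) - (m : ℝ) * multisetFrac (f i) D := by
      have hcp : Sstar.countP (fun x => f i x = true)
          = (Finset.univ.filter (fun j : Fin m => f i (ω j) = true)).card := by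
        rw [hSstar_def, Multiset.countP_map]
        rfl
      rw [hcp]
      have hbool : ∑ j : Fin m, (if f i (ω j) = true then (1:ℝ) else 0)
          = ((Finset.univ.filter (fun j : Fin m => f i (ω j) = true)).card : ℝ) := by
        rw [Finset.sum_boole]
      rw [← hbool]
      rw [Finset.sum_congr rfl (fun j _ => by rw [hg_def])]
      rw [Finset.sum_sub_distrib, Finset.sum_const, Finset.card_univ]
      simp [nsmul_eq_mul]
    have hfrac : multisetFrac (f i) Sstar
        = (Sstar.countP (fun x => f i x = true) : ℝ) / m := by
      rw [multisetFrac, hScard]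
    have h := hω i hiH
    rw [hgsum] at h
    rw [hfrac]
    have heqd : |(Sstar.countP (fun x => f i x = true) : ℝ) / m - multisetFrac (f i) D|
        = |(Sstar.countP (fun x => f i x = true) : ℝ) - (m : ℝ) * multisetFrac (f i) D| / m := by
      rw [show (Sstar.countP (fun x => f i x = true) : ℝ) / m - multisetFrac (f i) D
          = ((Sstar.countP (fun x => f i x = true) : ℝ) - (m : ℝ) * multisetFrac (f i) D) / m by
        field_simp]
      rw [abs_div, abs_of_pos hm0]
    rw [heqd, div_le_iff₀ hm0, ← ht_def]
    nlinarith [le_of_lt h]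
  -- membership of the good sample in every C i
  have hSmem : ∀ i, i ≤ k → Sstar ∈ C i := by
    intro i
    induction i with
    | zero => intro _; exact (hC0 _).2 hScard
    | succ j ih =>
      intro hjk
      have hj1 : j + 1 ∈ Finset.Icc 1 k := Finset.mem_Icc.2 ⟨Nat.le_add_left 1 j, hjk⟩
      rw [hCstep _ hj1]
      simp only [Nat.add_sub_cancel]
      refine ⟨ih (Nat.le_of_succ_le hjk), fun hjH => ?_⟩
      have h1 := hSfrac _ hjH
      have h2 := ha _ hjH
      calc |multisetFrac (f (j+1)) Sstar - a (j+1)|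
          ≤ |multisetFrac (f (j+1)) Sstar - multisetFrac (f (j+1)) D|
            + |multisetFrac (f (j+1)) D - a (j+1)| := abs_sub_le _ _ _
        _ ≤ ε / 100 + ε / 100 := add_le_add h1 h2
        _ = ε / 50 := by ring
  -- each hard step shrinks the consistent set by a factor 94/100
  have hstep94 : ∀ i ∈ Finset.Icc 1 k, i ∈ H →
      ((C i).card : ℝ) ≤ (94 / 100) * ((C (i - 1)).card : ℝ) := by
    intro i hik hiH
    have hik2 := Finset.mem_Icc.1 hik
    have hpos : (0:ℝ) < ((C (i - 1)).card : ℝ) := by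
      have hmem : Sstar ∈ C (i - 1) := hSmem (i - 1) (le_trans (Nat.sub_le i 1) hik2.2)
      have := Finset.card_pos.2 ⟨Sstar, hmem⟩
      exact_mod_cast this
    have hsum := hscore i hiH
    have hsum' : ∑ S ∈ C (i - 1), Real.exp (-|multisetFrac (f i) D - multisetFrac (f i) S| / ε)
        < (91 / 100) * ((C (i - 1)).card : ℝ) := by
      have heq : ∑ S ∈ C (i - 1), Real.exp (-|multisetFrac (f i) D - multisetFrac (f i) S| / ε)
          = ((C (i - 1)).card : ℝ) * ((1 / ((C (i - 1)).card : ℝ)) *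
            ∑ S ∈ C (i - 1), Real.exp (-|multisetFrac (f i) D - multisetFrac (f i) S| / ε)) := by
        field_simp
      rw [heq]
      calc ((C (i - 1)).card : ℝ) * _ < ((C (i - 1)).card : ℝ) * (91 / 100) :=
            (mul_lt_mul_iff_right₀ hpos).2 hsum
        _ = (91 / 100) * ((C (i - 1)).card : ℝ) := by ring
    have hterm : ∀ S ∈ C i, Real.exp (-(3 / 100))
        ≤ Real.exp (-|multisetFrac (f i) D - multisetFrac (f i) S| / ε) := by
      intro S hS
      have h50 : |multisetFrac (f i) S - a i| ≤ ε / 50 := ((hCstep i hik S).1 hS).2 hiH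
      have h100 := ha i hiH
      have habs : |multisetFrac (f i) D - multisetFrac (f i) S| ≤ 3 * ε / 100 := by
        calc |multisetFrac (f i) D - multisetFrac (f i) S|
            ≤ |multisetFrac (f i) D - a i| + |a i - multisetFrac (f i) S| := abs_sub_le _ _ _
          _ ≤ ε / 100 + ε / 50 := add_le_add h100 (by rw [abs_sub_comm]; exact h50)
          _ = 3 * ε / 100 := by ring
      apply Real.exp_le_exp.2
      rw [neg_div]
      apply neg_le_neg
      rw [div_le_iff₀ hε0]
      nlinarith [abs_nonneg (multisetFrac (f i) D - multisetFrac (f i) S)]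
    have hsubCi : C i ⊆ C (i - 1) := fun S hS => ((hCstep i hik S).1 hS).1
    have hlow : ((C i).card : ℝ) * Real.exp (-(3 / 100))
        ≤ ∑ S ∈ C (i - 1), Real.exp (-|multisetFrac (f i) D - multisetFrac (f i) S| / ε) := by
      calc ((C i).card : ℝ) * Real.exp (-(3 / 100))
          = ∑ _S ∈ C i, Real.exp (-(3 / 100)) := by rw [Finset.sum_const, nsmul_eq_mul]
        _ ≤ ∑ S ∈ C i, Real.exp (-|multisetFrac (f i) D - multisetFrac (f i) S| / ε) :=
            Finset.sum_le_sum hterm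
        _ ≤ ∑ S ∈ C (i - 1), Real.exp (-|multisetFrac (f i) D - multisetFrac (f i) S| / ε) :=
            Finset.sum_le_sum_of_subset_of_nonneg hsubCi
              (fun S _ _ => le_of_lt (Real.exp_pos _))
    have hexp97 : (97 / 100 : ℝ) ≤ Real.exp (-(3 / 100)) := by
      have := Real.add_one_le_exp (-(3 / 100) : ℝ)
      linarith
    have hCnn : (0:ℝ) ≤ ((C i).card : ℝ) := Nat.cast_nonneg _
    nlinarith [hlow, hsum', hexp97, hCnn, hpos]
  -- iterate the shrinking
  have hCcard : ∀ i, i ≤ k →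
      ((C i).card : ℝ) ≤ (94 / 100) ^ ((H ∩ Finset.Icc 1 i).card) * ((C 0).card : ℝ) := by
    intro i
    induction i with
    | zero => intro _; simp
    | succ j ih =>
      intro hjk
      have hj : j ≤ k := Nat.le_of_succ_le hjk
      have hmem' : j + 1 ∈ Finset.Icc 1 k := Finset.mem_Icc.2 ⟨Nat.le_add_left 1 j, hjk⟩
      have hIcc : Finset.Icc 1 (j + 1) = insert (j + 1) (Finset.Icc 1 j) := by
        ext x; simp only [Finset.mem_Icc, Finset.mem_insert]; omega
      have hnotmem : j + 1 ∉ Finset.Icc 1 j := by simp [Finset.mem_Icc]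
      by_cases hjH : (j + 1) ∈ H
      · have h94 := hstep94 (j + 1) hmem' hjH
        rw [Nat.add_sub_cancel] at h94
        have hinter : (H ∩ Finset.Icc 1 (j + 1)).card = (H ∩ Finset.Icc 1 j).card + 1 := by
          rw [hIcc, Finset.inter_comm, Finset.insert_inter_of_mem hjH, Finset.inter_comm]
          rw [Finset.card_insert_of_notMem]
          intro hc
          exact hnotmem (Finset.mem_inter.1 hc).2
        rw [hinter, pow_succ]
        calc ((C (j + 1)).card : ℝ) ≤ (94 / 100) * ((C j).card : ℝ) := h94
          _ ≤ (94 / 100) * ((94 / 100) ^ ((H ∩ Finset.Icc 1 j).card) * ((C 0).card : ℝ)) :=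
              mul_le_mul_of_nonneg_left (ih hj) (by norm_num)
          _ = (94 / 100) ^ ((H ∩ Finset.Icc 1 j).card) * (94 / 100) * ((C 0).card : ℝ) := by
              ring
      · have heq : C (j + 1) = C j := by
          apply Finset.ext
          intro S
          rw [hCstep _ hmem' S, Nat.add_sub_cancel]
          simp [hjH]
        have hinter : H ∩ Finset.Icc 1 (j + 1) = H ∩ Finset.Icc 1 j := by
          rw [hIcc, Finset.inter_comm, Finset.insert_inter_of_notMem hjH, Finset.inter_comm]
        rw [heq, hinter]
        exact ih hj
  -- bound on the size of C 0
  have hC0card : ((C 0).card : ℝ) ≤ ((Fintype.card X : ℝ)) ^ m := by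
    have hsub : C 0 ⊆ Finset.image
        (fun ω' : Fin m → X => Multiset.map ω' Finset.univ.val) Finset.univ := by
      intro S hS
      rw [hC0] at hS
      have hlen : S.toList.length = m := by rw [Multiset.length_toList, hS]
      refine Finset.mem_image.2 ⟨fun j : Fin m => S.toList.get (Fin.cast hlen.symm j),
        Finset.mem_univ _, ?_⟩
      rw [← aux_coe_eq_map S.toList m hlen]
      exact Multiset.coe_toList S
    calc ((C 0).card : ℝ)
        ≤ ((Finset.image (fun ω' : Fin m → X => Multiset.map ω' Finset.univ.val)
            Finset.univ).card : ℝ) := by exact_mod_cast Finset.card_le_card hsub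
      _ ≤ ((Finset.univ : Finset (Fin m → X)).card : ℝ) := by
          exact_mod_cast Finset.card_image_le
      _ = ((Fintype.card X : ℝ)) ^ m := by
          rw [Finset.card_univ, Fintype.card_fun]
          push_cast
          simp
  -- combine everything
  have hone : (1:ℝ) ≤ ((C k).card : ℝ) := by
    have := Finset.card_pos.2 ⟨Sstar, hSmem k le_rfl⟩
    exact_mod_cast this
  have hHH : H ∩ Finset.Icc 1 k = H := Finset.inter_eq_left.2 hH
  have hchain : ((C k).card : ℝ) ≤ (94 / 100) ^ H.card * ((C 0).card : ℝ) := by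
    have := hCcard k le_rfl
    rwa [hHH] at this
  have hfinal : (1:ℝ) ≤ (94 / 100) ^ H.card * ((Fintype.card X : ℝ)) ^ m := by
    calc (1:ℝ) ≤ ((C k).card : ℝ) := hone
      _ ≤ (94 / 100) ^ H.card * ((C 0).card : ℝ) := hchain
      _ ≤ (94 / 100) ^ H.card * ((Fintype.card X : ℝ)) ^ m :=
          mul_le_mul_of_nonneg_left hC0card (by positivity)
  have hlog1 : (0:ℝ) ≤ (H.card : ℝ) * Real.log (94 / 100)
      + (m : ℝ) * Real.log (Fintype.card X) := by
    have hpos1 : (0:ℝ) < (94 / 100 : ℝ) ^ H.card := by positivity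
    have hpos2 : (0:ℝ) < ((Fintype.card X : ℝ)) ^ m := by positivity
    have hlogge := Real.log_nonneg hfinal
    rw [Real.log_mul (ne_of_gt hpos1) (ne_of_gt hpos2), Real.log_pow, Real.log_pow] at hlogge
    push_cast at hlogge
    linarith
  have hA : (1:ℝ) / 20 < -Real.log (94 / 100) := by
    have h9 : Real.log (94 / 100 : ℝ) < -(1 / 20) := by
      rw [Real.log_lt_iff_lt_exp (by norm_num)]
      have := Real.add_one_le_exp (-(1 / 20) : ℝ)
      linarith
    linarith
  by_cases hH0 : H.card = 0
  · rw [hH0]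
    push_cast
    positivity
  · have h1le : (1:ℝ) ≤ (H.card : ℝ) := by
      exact_mod_cast Nat.one_le_iff_ne_zero.2 hH0
    have hstrict := mul_lt_mul_of_pos_right hA (lt_of_lt_of_le zero_lt_one h1le)
    nlinarith [hlog1, hstrict, hlogN, hm0]
end

section
/- Let X be a finite set with N = |X| ≥ 1, let f_1,…,f_k : X → {0,1} be predicates with k ≥ 1, let ε′ ∈ (0,1], and let m be a positive integer with m ≥ 8·ln(2k)/ε′². Let C_0 = {F ∈ ℝ^X : F_x ≥ 0 for all x and ∑_x F_x ≤ m}, and for F ∈ C_0 define f_i(F) = (1/m)·∑_{x : f_i(x)=1} F_x. Then for every F ∈ C_0 there exists a point G ∈ C_0 whose coordinates are all nonnegative integers such that |f_i(F) − f_i(G)| ≤ ε′ for every i ∈ {1,…,k}. -/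
/-- The value of the predicate query `f` on the fractional histogram `F`, scaled by the
histogram size bound `m`: `f(F) = (1/m)·∑_{x : f(x)=1} F x`. -/
noncomputable def histQuery {X : Type*} [Fintype X] (m : ℕ) (f : X → Bool) (F : X → ℝ) : ℝ :=
  (1 / (m : ℝ)) * ∑ x ∈ Finset.univ.filter (fun x => f x = true), F x

namespace SPAux

lemma tail_bound {V : Type*} [Fintype V] (m : ℕ) (w φ : V → ℝ) (hw : ∀ v, 0 ≤ w v)
    (lam a : ℝ) (hlam : 0 ≤ lam) (P : (Fin m → V) → Prop) [DecidablePred P]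
    (hP : ∀ ω, P ω → a < ∑ j, φ (ω j)) :
    ∑ ω ∈ Finset.univ.filter P, ∏ j, w (ω j)
      ≤ Real.exp (-(lam * a)) * (∑ v, w v * Real.exp (lam * φ v)) ^ m := by
  classical
  have step1 : ∀ ω ∈ Finset.univ.filter P, ∏ j, w (ω j)
      ≤ Real.exp (-(lam * a)) * ∏ j, (w (ω j) * Real.exp (lam * φ (ω j))) := by
    intro ω hω
    have h1 : a < ∑ j, φ (ω j) := hP ω (Finset.mem_filter.1 hω).2
    have h2 : ∏ j, (w (ω j) * Real.exp (lam * φ (ω j)))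
        = (∏ j, w (ω j)) * Real.exp (∑ j, lam * φ (ω j)) := by
      rw [Real.exp_sum, Finset.prod_mul_distrib]
    have h3 : Real.exp (-(lam * a)) * Real.exp (∑ j, lam * φ (ω j))
        = Real.exp (lam * (∑ j, φ (ω j)) - lam * a) := by
      rw [← Real.exp_add, ← Finset.mul_sum]
      ring_nf
    have h4 : (1 : ℝ) ≤ Real.exp (lam * (∑ j, φ (ω j)) - lam * a) := by
      rw [Real.one_le_exp_iff]
      nlinarith [h1]
    have hprod : 0 ≤ ∏ j, w (ω j) := Finset.prod_nonneg fun j _ => hw _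
    calc ∏ j, w (ω j) = (∏ j, w (ω j)) * 1 := by ring
      _ ≤ (∏ j, w (ω j)) * Real.exp (lam * (∑ j, φ (ω j)) - lam * a) := by
          exact mul_le_mul_of_nonneg_left h4 hprod
      _ = Real.exp (-(lam * a)) * ∏ j, (w (ω j) * Real.exp (lam * φ (ω j))) := by
          rw [h2, ← h3]; ring
  calc ∑ ω ∈ Finset.univ.filter P, ∏ j, w (ω j)
      ≤ ∑ ω ∈ Finset.univ.filter P,
          Real.exp (-(lam * a)) * ∏ j, (w (ω j) * Real.exp (lam * φ (ω j))) :=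
        Finset.sum_le_sum step1
    _ ≤ ∑ ω : Fin m → V,
          Real.exp (-(lam * a)) * ∏ j, (w (ω j) * Real.exp (lam * φ (ω j))) := by
        apply Finset.sum_le_sum_of_subset_of_nonneg (Finset.filter_subset _ _)
        intro ω _ _
        have : 0 ≤ ∏ j, (w (ω j) * Real.exp (lam * φ (ω j))) :=
          Finset.prod_nonneg fun j _ => mul_nonneg (hw _) (Real.exp_pos _).le
        positivity
    _ = Real.exp (-(lam * a)) * ∑ ω : Fin m → V, ∏ j, (w (ω j) * Real.exp (lam * φ (ω j))) := by
        rw [Finset.mul_sum]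
    _ = Real.exp (-(lam * a)) * (∑ v, w v * Real.exp (lam * φ v)) ^ m := by
        rw [Fintype.sum_pow (fun v => w v * Real.exp (lam * φ v)) m]

lemma chernoff_tail {V : Type*} [Fintype V] (m : ℕ) (w φ : V → ℝ) (hw : ∀ v, 0 ≤ w v) (hw1 : ∑ v, w v = 1)
    (hφ : ∀ v, φ v = 0 ∨ φ v = 1) (ε : ℝ) (hε : 0 < ε) (hε1 : ε ≤ 1)
    (P : (Fin m → V) → Prop) [DecidablePred P]
    (hP : ∀ ω, P ω → (m : ℝ) * (∑ v, w v * φ v) + ε * m < ∑ j, φ (ω j)) :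
    ∑ ω ∈ Finset.univ.filter P, ∏ j, w (ω j) ≤ Real.exp (-(ε ^ 2 * m) / 3) := by
  classical
  set lam : ℝ := 2 * ε / 3 with hlam_def
  set p : ℝ := ∑ v, w v * φ v with hp_def
  have hlam0 : 0 ≤ lam := by positivity
  have hlam1 : lam ≤ 1 := by rw [hlam_def]; linarith
  have hp0 : 0 ≤ p := Finset.sum_nonneg fun v _ => by
    rcases hφ v with h | h <;> simp [h, hw v]
  have hp1 : p ≤ 1 := by
    rw [← hw1]
    apply Finset.sum_le_sum
    intro v _
    rcases hφ v with h | h <;> simp [h, hw v]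
  have key := tail_bound m w φ hw lam ((m : ℝ) * p + ε * m) hlam0 P hP
  have hmgf : ∑ v, w v * Real.exp (lam * φ v) = 1 + p * (Real.exp lam - 1) := by
    have h : ∀ v, w v * Real.exp (lam * φ v)
        = w v + (w v * φ v) * (Real.exp lam - 1) := by
      intro v
      rcases hφ v with h | h <;> rw [h] <;> simp <;> ring
    rw [Finset.sum_congr rfl fun v _ => h v, Finset.sum_add_distrib, hw1, ← Finset.sum_mul,
      ← hp_def]
  have hexp1 : (1 : ℝ) ≤ Real.exp lam := Real.one_le_exp hlam0
  have hbase0 : (0 : ℝ) ≤ 1 + p * (Real.exp lam - 1) := by nlinarith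
  have hbase : 1 + p * (Real.exp lam - 1) ≤ Real.exp (p * (Real.exp lam - 1)) := by
    have := Real.add_one_le_exp (p * (Real.exp lam - 1)); linarith
  have hpow : (1 + p * (Real.exp lam - 1)) ^ m ≤ Real.exp ((m : ℝ) * (p * (Real.exp lam - 1))) := by
    calc (1 + p * (Real.exp lam - 1)) ^ m ≤ (Real.exp (p * (Real.exp lam - 1))) ^ m :=
          pow_le_pow_left₀ hbase0 hbase m
      _ = Real.exp ((m : ℝ) * (p * (Real.exp lam - 1))) := (Real.exp_nat_mul _ m).symm
  -- bound exp lam - 1 - lam ≤ (3/4) lam^2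
  have hquad : Real.exp lam ≤ 1 + lam + (3/4) * lam ^ 2 := by
    have h := Real.exp_bound' hlam0 hlam1 (n := 3) (by norm_num)
    have hs : (∑ i ∈ Finset.range 3, lam ^ i / (Nat.factorial i)) = 1 + lam + lam ^ 2 / 2 := by
      norm_num [Finset.sum_range_succ, Nat.factorial]
    rw [hs] at h
    have hl3 : lam ^ 3 ≤ lam ^ 2 := pow_le_pow_of_le_one hlam0 hlam1 (by norm_num)
    have : lam ^ 3 * (3 + 1) / ((Nat.factorial 3 : ℝ) * 3) = lam ^ 3 * (2/9) := by
      norm_num [Nat.factorial]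
      ring
    nlinarith [h]
  have hfinal : Real.exp (-(lam * ((m : ℝ) * p + ε * m)))
      * Real.exp ((m : ℝ) * (p * (Real.exp lam - 1)))
      ≤ Real.exp (-(ε ^ 2 * m) / 3) := by
    rw [← Real.exp_add, Real.exp_le_exp]
    have hd0 : 0 ≤ Real.exp lam - 1 - lam := by
      have := Real.add_one_le_exp lam; linarith
    have hd : Real.exp lam - 1 - lam ≤ (3/4) * lam ^ 2 := by linarith
    have hm0 : (0 : ℝ) ≤ (m : ℝ) := Nat.cast_nonneg m
    -- m * p * (exp lam - 1 - lam) ≤ m * (3/4) lam^2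
    have h1 : (m : ℝ) * (p * (Real.exp lam - 1 - lam)) ≤ (m : ℝ) * ((3/4) * lam ^ 2) := by
      apply mul_le_mul_of_nonneg_left _ hm0
      nlinarith
    have h2 : (m : ℝ) * ((3/4) * lam ^ 2) - lam * (ε * m) = -(ε ^ 2 * m) / 3 := by
      rw [hlam_def]; ring
    nlinarith [h1]
  calc ∑ ω ∈ Finset.univ.filter P, ∏ j, w (ω j)
      ≤ Real.exp (-(lam * ((m : ℝ) * p + ε * m))) * (∑ v, w v * Real.exp (lam * φ v)) ^ m := key
    _ ≤ Real.exp (-(lam * ((m : ℝ) * p + ε * m)))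
        * Real.exp ((m : ℝ) * (p * (Real.exp lam - 1))) := by
        rw [hmgf]
        exact mul_le_mul_of_nonneg_left hpow (Real.exp_pos _).le
    _ ≤ Real.exp (-(ε ^ 2 * m) / 3) := hfinal

lemma sum_filter_exists_le {ι α : Type*} [Fintype α] [Fintype ι]
    (Q : ι → α → Prop) [∀ i, DecidablePred (Q i)] [DecidablePred fun a => ∃ i, Q i a]
    (W : α → ℝ) (hW : ∀ a, 0 ≤ W a) :
    ∑ a ∈ Finset.univ.filter (fun a => ∃ i, Q i a), W a
      ≤ ∑ i, ∑ a ∈ Finset.univ.filter (Q i), W a := by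
  classical
  calc ∑ a ∈ Finset.univ.filter (fun a => ∃ i, Q i a), W a
      ≤ ∑ a ∈ Finset.univ.filter (fun a => ∃ i, Q i a), ∑ i, (if Q i a then W a else 0) := by
        apply Finset.sum_le_sum
        intro a ha
        obtain ⟨i0, hi0⟩ := (Finset.mem_filter.1 ha).2
        have h2 := Finset.single_le_sum (f := fun i => if Q i a then W a else 0)
          (fun i _ => by by_cases h : Q i a <;> simp [h, hW a]) (Finset.mem_univ i0)
        simpa [hi0] using h2
    _ ≤ ∑ a : α, ∑ i, (if Q i a then W a else 0) := by
        apply Finset.sum_le_sum_of_subset_of_nonneg (Finset.filter_subset _ _)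
        intro a _ _
        exact Finset.sum_nonneg fun i _ => by by_cases h : Q i a <;> simp [h, hW a]
    _ = ∑ i, ∑ a : α, (if Q i a then W a else 0) := Finset.sum_comm
    _ = ∑ i, ∑ a ∈ Finset.univ.filter (Q i), W a := by
        refine Finset.sum_congr rfl fun i _ => ?_
        rw [Finset.sum_filter]

end SPAux

open Finset SPAux

/-- **Lemma 9 (spacePartitionLemma).** Let `C₀ = {F ∈ ℝ^X : F ≥ 0, ∑_x F_x ≤ m}` be the set of
fractional histograms, where `m ≥ 8·ln(2k)/ε′²`.  Every `F ∈ C₀` is `ε′`-close, in every one of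
the `k` query values, to a point `G ∈ C₀` all of whose coordinates are nonnegative integers. -/
theorem fractional_histogram_near_integer_point {X : Type*} [Fintype X]
    (hN : 1 ≤ Fintype.card X)
    (k : ℕ) (hk : 1 ≤ k) (f : Fin k → X → Bool)
    (ε' : ℝ) (hε' : 0 < ε' ∧ ε' ≤ 1)
    (m : ℕ) (hm : 0 < m) (hm2 : 8 * Real.log (2 * k) / ε' ^ 2 ≤ (m : ℝ))
    (F : X → ℝ) (hF : (∀ x, 0 ≤ F x) ∧ ∑ x, F x ≤ (m : ℝ)) :
    ∃ G : X → ℝ, (∃ g : X → ℕ, ∀ x, G x = (g x : ℝ)) ∧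
      (∀ x, 0 ≤ G x) ∧ ∑ x, G x ≤ (m : ℝ) ∧
      ∀ i : Fin k, |histQuery m (f i) F - histQuery m (f i) G| ≤ ε' := by
  classical
  obtain ⟨hε0, hε1⟩ := hε'
  obtain ⟨hF0, hFm⟩ := hF
  have hm0 : (0 : ℝ) < m := by exact_mod_cast hm
  -- the sampling distribution on `Option X`
  set S : ℝ := ∑ x, F x with hS_def
  have hS0 : 0 ≤ S := Finset.sum_nonneg fun x _ => hF0 x
  set w : Option X → ℝ := fun v => Option.elim v (1 - S / m) (fun x => F x / m) with hw_def
  have hw : ∀ v, 0 ≤ w v := by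
    intro v
    cases v with
    | none =>
        have : S / m ≤ 1 := by rw [div_le_one hm0]; exact hFm
        simp only [hw_def, Option.elim]
        linarith
    | some x =>
        simp only [hw_def, Option.elim]
        exact div_nonneg (hF0 x) hm0.le
  have hw1 : ∑ v, w v = 1 := by
    rw [Fintype.sum_option]
    simp only [hw_def, Option.elim]
    rw [← Finset.sum_div, ← hS_def]
    ring
  -- two families of {0,1}-valued test functions (query and its complement)
  set Φ : Fin k → Bool → Option X → ℝ :=
    fun i b v => if b then (if Option.elim v false (f i) = true then 1 else 0)
      else (1 - (if Option.elim v false (f i) = true then 1 else 0)) with hΦ_def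
  have hΦ01 : ∀ i b v, Φ i b v = 0 ∨ Φ i b v = 1 := by
    intro i b v
    by_cases h : Option.elim v false (f i) = true <;> cases b <;> simp [hΦ_def, h]
  set p : Fin k → ℝ := fun i => ∑ v, w v * Φ i true v with hp_def
  have hq : ∀ i, ∑ v, w v * Φ i false v = 1 - p i := by
    intro i
    have : ∀ v, w v * Φ i false v = w v - w v * Φ i true v := by
      intro v
      simp only [hΦ_def, Bool.false_eq_true, if_false, if_true]
      ring
    rw [Finset.sum_congr rfl fun v _ => this v, Finset.sum_sub_distrib, hw1, hp_def]
  have hpF : ∀ i, (m : ℝ) * p i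
      = ∑ x ∈ Finset.univ.filter (fun x => f i x = true), F x := by
    intro i
    simp only [hp_def]
    rw [Fintype.sum_option]
    simp only [hΦ_def, Option.elim, hw_def, if_true]
    simp only [Bool.false_eq_true, if_false, mul_zero, zero_add]
    rw [Finset.sum_filter, Finset.mul_sum]
    refine Finset.sum_congr rfl fun x _ => ?_
    by_cases h : f i x = true
    · simp only [h, if_true, mul_one]
      field_simp
    · simp [h]
  -- the bad events
  set Q : Fin k × Bool → (Fin m → Option X) → Prop :=
    fun ib ω => (m : ℝ) * (∑ v, w v * Φ ib.1 ib.2 v) + ε' * m < ∑ j, Φ ib.1 ib.2 (ω j)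
      with hQ_def
  set W : (Fin m → Option X) → ℝ := fun ω => ∏ j, w (ω j) with hW_def
  have hWnn : ∀ ω, 0 ≤ W ω := fun ω => Finset.prod_nonneg fun j _ => hw _
  have htot : ∑ ω : Fin m → Option X, W ω = 1 := by
    rw [hW_def, ← Fintype.sum_pow, hw1, one_pow]
  -- the good event
  set good : (Fin m → Option X) → Prop :=
    fun ω => ∀ i, |(∑ j, Φ i true (ω j)) - (m : ℝ) * p i| ≤ ε' * m with hgood_def
  -- each not-good ω lies in some bad event
  have hbad_sub : ∀ ω, ¬ good ω → ∃ ib : Fin k × Bool, Q ib ω := by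
    intro ω hng
    simp only [hgood_def] at hng
    push_neg at hng
    obtain ⟨i, hi⟩ := hng
    rcases lt_abs.mp hi with h | h
    · exact ⟨⟨i, true⟩, by rw [hQ_def]; simp only [← hp_def]; linarith⟩
    · refine ⟨⟨i, false⟩, ?_⟩
      rw [hQ_def]
      simp only
      rw [hq i]
      have hTc : ∑ j, Φ i false (ω j) = (m : ℝ) - ∑ j, Φ i true (ω j) := by
        have : ∀ j : Fin m, Φ i false (ω j) = 1 - Φ i true (ω j) := by
          intro j; simp [hΦ_def]
        rw [Finset.sum_congr rfl fun j _ => this j, Finset.sum_sub_distrib]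
        simp [Finset.card_univ]
      rw [hTc]
      linarith
  -- union bound
  have hunion : ∑ ω ∈ Finset.univ.filter (fun ω => ¬ good ω), W ω
      ≤ ∑ ib : Fin k × Bool, ∑ ω ∈ Finset.univ.filter (Q ib), W ω := by
    calc ∑ ω ∈ Finset.univ.filter (fun ω => ¬ good ω), W ω
        ≤ ∑ ω ∈ Finset.univ.filter (fun ω => ∃ ib : Fin k × Bool, Q ib ω), W ω := by
          apply Finset.sum_le_sum_of_subset_of_nonneg
          · exact Finset.monotone_filter_right _ (fun ω _ hω => hbad_sub ω hω)
          · intro ω _ _; exact hWnn ω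
      _ ≤ ∑ ib : Fin k × Bool, ∑ ω ∈ Finset.univ.filter (Q ib), W ω :=
          sum_filter_exists_le Q W hWnn
  -- Chernoff bound on each bad event
  have htail : ∀ ib : Fin k × Bool,
      ∑ ω ∈ Finset.univ.filter (Q ib), W ω ≤ Real.exp (-(ε' ^ 2 * m) / 3) := by
    intro ib
    exact chernoff_tail m w (Φ ib.1 ib.2) hw hw1 (hΦ01 ib.1 ib.2) ε' hε0 hε1 (Q ib)
      (fun ω h => h)
  -- numerical bound
  have h2k : (2 : ℝ) ≤ 2 * k := by
    have : (1 : ℝ) ≤ k := by exact_mod_cast hk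
    linarith
  have hlog0 : 0 ≤ Real.log (2 * k) := Real.log_nonneg (by linarith)
  have h8 : 8 * Real.log (2 * k) ≤ ε' ^ 2 * m := by
    rw [div_le_iff₀ (by positivity)] at hm2
    linarith [hm2]
  have hexp_le : Real.exp (-(ε' ^ 2 * m) / 3) ≤ Real.exp (-(2 * Real.log (2 * k))) := by
    rw [Real.exp_le_exp]
    linarith
  have hexp_eq : Real.exp (-(2 * Real.log (2 * k))) = (2 * (k:ℝ))⁻¹ * (2 * (k:ℝ))⁻¹ := by
    rw [show -(2 * Real.log (2 * (k:ℝ))) = (-(Real.log (2*k))) + (-(Real.log (2*k))) by ring,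
      Real.exp_add, Real.exp_neg, Real.exp_log (by linarith)]
  have hbad_half : ∑ ω ∈ Finset.univ.filter (fun ω => ¬ good ω), W ω ≤ 1 / 2 := by
    have hcard : ∑ ib : Fin k × Bool, Real.exp (-(ε' ^ 2 * m) / 3)
        = (2 * k : ℝ) * Real.exp (-(ε' ^ 2 * m) / 3) := by
      rw [Finset.sum_const, Finset.card_univ, Fintype.card_prod, Fintype.card_fin,
        Fintype.card_bool, nsmul_eq_mul]
      push_cast
      ring
    have h1 : ∑ ω ∈ Finset.univ.filter (fun ω => ¬ good ω), W ω
        ≤ (2 * k : ℝ) * Real.exp (-(ε' ^ 2 * m) / 3) := by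
      rw [← hcard]
      exact hunion.trans (Finset.sum_le_sum fun ib _ => htail ib)
    have h2 : (2 * k : ℝ) * Real.exp (-(ε' ^ 2 * m) / 3)
        ≤ (2 * k : ℝ) * ((2 * (k:ℝ))⁻¹ * (2 * (k:ℝ))⁻¹) := by
      apply mul_le_mul_of_nonneg_left _ (by linarith)
      rw [← hexp_eq]
      exact hexp_le
    have h3 : (2 * k : ℝ) * ((2 * (k:ℝ))⁻¹ * (2 * (k:ℝ))⁻¹) = (2 * (k:ℝ))⁻¹ := by
      field_simp
    have h4 : (2 * (k:ℝ))⁻¹ ≤ 1 / 2 := by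
      rw [inv_le_comm₀ (by linarith) (by norm_num)] <;> linarith
    linarith
  -- extract a good sample
  have hsplit := Finset.sum_filter_add_sum_filter_not Finset.univ good W
  have hgood_pos : 0 < ∑ ω ∈ Finset.univ.filter good, W ω := by
    have := htot
    linarith [hbad_half, hsplit.symm ▸ htot]
  have hne : (Finset.univ.filter good).Nonempty := by
    by_contra h
    rw [Finset.not_nonempty_iff_eq_empty] at h
    rw [h, Finset.sum_empty] at hgood_pos
    exact lt_irrefl _ hgood_pos
  obtain ⟨ω, hωmem⟩ := hne
  have hgoodω : good ω := (Finset.mem_filter.1 hωmem).2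
  -- build the integer histogram
  set g : X → ℕ := fun x => (Finset.univ.filter fun j => ω j = some x).card with hg_def
  have hgs : ∀ s : Finset X,
      ∑ x ∈ s, (g x : ℝ) = ∑ j, ∑ x ∈ s, (if ω j = some x then (1:ℝ) else 0) := by
    intro s
    rw [Finset.sum_comm]
    refine Finset.sum_congr rfl fun x _ => ?_
    rw [hg_def]
    simp only
    rw [Finset.card_filter, Nat.cast_sum]
    simp
  refine ⟨fun x => (g x : ℝ), ⟨g, fun x => rfl⟩, fun x => Nat.cast_nonneg _, ?_, ?_⟩
  -- counting identities
  · -- total size bound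
    rw [hgs Finset.univ]
    have hinner : ∀ j : Fin m, ∑ x, (if ω j = some x then (1:ℝ) else 0) ≤ 1 := by
      intro j
      cases hv : ω j with
      | none => simp
      | some y => simp [Finset.sum_ite_eq]
    calc ∑ j : Fin m, ∑ x, (if ω j = some x then (1:ℝ) else 0)
        ≤ ∑ j : Fin m, (1:ℝ) := Finset.sum_le_sum fun j _ => hinner j
      _ = m := by simp
  · -- query closeness
    intro i
    have hq_i := hgoodω i
    have hj : ∀ j : Fin m,
        ∑ x ∈ Finset.univ.filter (fun x => f i x = true), (if ω j = some x then (1:ℝ) else 0)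
          = Φ i true (ω j) := by
      intro j
      cases hv : ω j with
      | none => simp [hΦ_def]
      | some y => simp [hΦ_def, Finset.sum_ite_eq, Finset.mem_filter]; by_cases h : f i y = true <;> simp [h]
    have hqG : ∑ x ∈ Finset.univ.filter (fun x => f i x = true), (g x : ℝ)
        = ∑ j, Φ i true (ω j) := by
      rw [hgs (Finset.univ.filter (fun x => f i x = true))]
      exact Finset.sum_congr rfl fun j _ => hj j
    have hQF : histQuery m (f i) F = (1 / (m:ℝ)) * ((m:ℝ) * p i) := by
      rw [histQuery, hpF i]
    have hQG : histQuery m (f i) (fun x => (g x : ℝ))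
        = (1 / (m:ℝ)) * ∑ j, Φ i true (ω j) := by
      rw [histQuery, hqG]
    rw [hQF, hQG]
    have hrw : (1 / (m:ℝ)) * ((m:ℝ) * p i) - (1 / (m:ℝ)) * ∑ j, Φ i true (ω j)
        = (1 / (m:ℝ)) * ((m:ℝ) * p i - ∑ j, Φ i true (ω j)) := by ring
    rw [hrw, abs_mul, abs_of_nonneg (by positivity : (0:ℝ) ≤ 1 / (m:ℝ)),
      abs_sub_comm]
    calc (1 / (m:ℝ)) * |(∑ j, Φ i true (ω j)) - (m:ℝ) * p i|
        ≤ (1 / (m:ℝ)) * (ε' * m) := by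
          apply mul_le_mul_of_nonneg_left hq_i (by positivity)
      _ = ε' := by field_simp
end

section
/- Let X be a finite set with N = |X| ≥ 2, let f_1,…,f_k : X → {0,1} be predicates with k ≥ 1, let ε ∈ (0,1), and let m be a positive integer with m ≥ (1280000/ε²)·ln(2k). Let C_0 = {F ∈ ℝ^X : F_x ≥ 0 for all x and ∑_x F_x ≤ m}, for F ∈ C_0 let f_i(F) = (1/m)·∑_{x : f_i(x)=1} F_x, and for ε′ > 0 and F* ∈ C_0 let Good_{ε′}(F*) = {F ∈ C_0 : |f_i(F) − f_i(F*)| ≤ ε′ for all i = 1,…,k}. Then, with Vol denoting Lebesgue measure on ℝ^X, Vol({F* ∈ C_0 : Vol(Good_{ε/200}(F*)) < Vol(C_0)/N^{2m}}) ≤ (2/N)^m · Vol(C_0). -/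
open MeasureTheory

set_option maxHeartbeats 1000000 in
lemma exp_le_one_add_add_sq {l : ℝ} (h0 : 0 ≤ l) (h1 : l ≤ 1) :
    Real.exp l ≤ 1 + l + l ^ 2 := by
  have habs : |l| ≤ 1 := by rw [abs_of_nonneg h0]; exact h1
  have h := Real.exp_bound habs (n := 2) (by norm_num)
  have hs : ∑ i ∈ Finset.range 2, l ^ i / (i.factorial : ℝ) = 1 + l := by
    simp [Finset.sum_range_succ]
  rw [hs, abs_of_nonneg h0] at h
  norm_num [Nat.factorial] at h
  have h2 := abs_le.1 h
  nlinarith [sq_nonneg l]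

lemma chernoff_tail {Y : Type*} [Fintype Y] [DecidableEq Y] (m : ℕ) (p : Y → ℝ)
    (hp0 : ∀ a, 0 ≤ p a) (hp1 : ∑ a, p a = 1) (g : Y → Bool) (lam t : ℝ)
    (hl0 : 0 ≤ lam) (hl1 : lam ≤ 1) :
    ∑ ω ∈ Finset.univ.filter (fun ω : Fin m → Y =>
        t ≤ ∑ j, ((if g (ω j) then (1:ℝ) else 0) - ∑ a, (if g a then p a else 0))),
      ∏ j, p (ω j) ≤ Real.exp ((m : ℝ) * lam ^ 2 - lam * t) := by
  set q : ℝ := ∑ a, (if g a then p a else 0) with hqdef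
  have hq0 : 0 ≤ q := Finset.sum_nonneg fun a _ => by
    by_cases h : g a <;> simp [h, hp0 a]
  have hq1 : q ≤ 1 := by
    rw [← hp1]
    exact Finset.sum_le_sum fun a _ => by by_cases h : g a <;> simp [h, hp0 a]
  set ind : Y → ℝ := fun a => if g a then (1:ℝ) else 0 with hind
  set h : Y → ℝ := fun a => p a * Real.exp (lam * (ind a - q)) with hh
  have hprodnn : ∀ ω : Fin m → Y, 0 ≤ ∏ j, p (ω j) :=
    fun ω => Finset.prod_nonneg fun j _ => hp0 _
  -- Step A
  have stepA : ∑ ω ∈ Finset.univ.filter (fun ω : Fin m → Y =>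
        t ≤ ∑ j, (ind (ω j) - q)), ∏ j, p (ω j)
      ≤ Real.exp (-(lam * t)) * ∑ ω : Fin m → Y, ∏ j, h (ω j) := by
    rw [Finset.mul_sum]
    calc ∑ ω ∈ Finset.univ.filter (fun ω : Fin m → Y =>
        t ≤ ∑ j, (ind (ω j) - q)), ∏ j, p (ω j)
        ≤ ∑ ω ∈ Finset.univ.filter (fun ω : Fin m → Y =>
        t ≤ ∑ j, (ind (ω j) - q)),
          Real.exp (-(lam * t)) * ∏ j, h (ω j) := by
          apply Finset.sum_le_sum
          intro ω hω
          have hω' := (Finset.mem_filter.1 hω).2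
          have key : Real.exp (-(lam * t)) * ∏ j, h (ω j)
              = (∏ j, p (ω j)) * Real.exp (lam * ((∑ j, (ind (ω j) - q)) - t)) := by
            rw [hh]
            rw [Finset.prod_mul_distrib, ← Real.exp_sum]
            rw [mul_left_comm, ← Real.exp_add]
            congr 1
            rw [mul_sub, Finset.mul_sum]
            congr 1
            linarith
          rw [key]
          nth_rewrite 1 [← mul_one (∏ j, p (ω j))]
          apply mul_le_mul_of_nonneg_left _ (hprodnn ω)
          rw [← Real.exp_zero]
          apply Real.exp_le_exp.2
          have : 0 ≤ (∑ j, (ind (ω j) - q)) - t := by linarith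
          positivity
      _ ≤ ∑ ω : Fin m → Y, Real.exp (-(lam * t)) * ∏ j, h (ω j) := by
          apply Finset.sum_le_sum_of_subset_of_nonneg (Finset.filter_subset _ _)
          intro ω _ _
          have : 0 ≤ ∏ j, h (ω j) := Finset.prod_nonneg fun j _ => by
            exact mul_nonneg (hp0 _) (Real.exp_pos _).le
          positivity
  -- Step B
  have stepB : ∑ ω : Fin m → Y, ∏ j, h (ω j) = (∑ a, h a) ^ m := by
    have := Finset.prod_univ_sum (fun _ : Fin m => (Finset.univ : Finset Y))
      (fun _ a => h a)
    rw [Fintype.piFinset_univ] at this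
    rw [← this, Finset.prod_const, Finset.card_univ, Fintype.card_fin]
  -- Step C
  have hsum : ∑ a, h a = Real.exp (-(lam * q)) * (1 + q * (Real.exp lam - 1)) := by
    have : ∀ a, h a = Real.exp (-(lam * q)) *
        (p a + (if g a then p a else 0) * (Real.exp lam - 1)) := by
      intro a
      rw [hh]
      simp only [hind]
      by_cases hg : g a = true
      · rw [if_pos hg, if_pos hg]
        have he : Real.exp (lam * ((1:ℝ) - q)) = Real.exp (-(lam * q)) * Real.exp lam := by
          rw [← Real.exp_add]; ring_nf
        rw [he]; ring
      · rw [if_neg hg, if_neg hg]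
        have he : lam * ((0:ℝ) - q) = -(lam * q) := by ring
        rw [he]; ring
    rw [Finset.sum_congr rfl fun a _ => this a, ← Finset.mul_sum]
    congr 1
    rw [Finset.sum_add_distrib, hp1, ← Finset.sum_mul, ← hqdef]
  have stepC : ∑ a, h a ≤ Real.exp (lam ^ 2) := by
    rw [hsum]
    have hE : Real.exp lam ≤ 1 + lam + lam ^ 2 := exp_le_one_add_add_sq hl0 hl1
    have h1 : 1 + q * (Real.exp lam - 1) ≤ Real.exp (q * lam + q * lam ^ 2) := by
      have : 1 + q * (Real.exp lam - 1) ≤ 1 + (q * lam + q * lam ^ 2) := by nlinarith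
      refine this.trans ?_
      linarith [Real.add_one_le_exp (q * lam + q * lam ^ 2)]
    calc Real.exp (-(lam * q)) * (1 + q * (Real.exp lam - 1))
        ≤ Real.exp (-(lam * q)) * Real.exp (q * lam + q * lam ^ 2) :=
          mul_le_mul_of_nonneg_left h1 (Real.exp_pos _).le
      _ = Real.exp (q * lam ^ 2) := by rw [← Real.exp_add]; ring_nf
      _ ≤ Real.exp (lam ^ 2) := by
          apply Real.exp_le_exp.2; nlinarith [sq_nonneg lam]
  have hsnn : 0 ≤ ∑ a, h a := Finset.sum_nonneg fun a _ =>
    mul_nonneg (hp0 _) (Real.exp_pos _).le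
  calc ∑ ω ∈ Finset.univ.filter (fun ω : Fin m → Y =>
        t ≤ ∑ j, (ind (ω j) - q)), ∏ j, p (ω j)
      ≤ Real.exp (-(lam * t)) * (∑ a, h a) ^ m := by rw [← stepB]; exact stepA
    _ ≤ Real.exp (-(lam * t)) * Real.exp (lam ^ 2) ^ m := by
        apply mul_le_mul_of_nonneg_left _ (Real.exp_pos _).le
        exact pow_le_pow_left₀ hsnn stepC m
    _ = Real.exp ((m : ℝ) * lam ^ 2 - lam * t) := by
        rw [← Real.exp_nat_mul, ← Real.exp_add]; ring_nf

set_option maxHeartbeats 1000000 in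
lemma rounding {X : Type*} [Fintype X] [DecidableEq X] {k : ℕ} (hk : 1 ≤ k)
    (f : Fin k → X → Bool) {ε : ℝ} (hε0 : 0 < ε) (hε1 : ε < 1)
    {m : ℕ} (hm : 0 < m) (hm2 : (1280000 / ε ^ 2) * Real.log (2 * k) ≤ (m : ℝ))
    (F : X → ℝ) (hF0 : ∀ x, 0 ≤ F x) (hF1 : ∑ x, F x ≤ (m : ℝ)) :
    ∃ P : X → ℕ, (∑ x, P x ≤ m) ∧
      ∀ i, |histQuery m (f i) (fun x => (P x : ℝ)) - histQuery m (f i) F| ≤ ε / 400 := by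
  have hmR : (0:ℝ) < m := Nat.cast_pos.2 hm
  set p : Option X → ℝ := fun a => a.elim (1 - (∑ x, F x) / m) (fun x => F x / m) with hp
  have hp0 : ∀ a, 0 ≤ p a := by
    rintro (_ | x)
    · simp only [hp, Option.elim]
      have : (∑ x, F x) / m ≤ 1 := by rw [div_le_one hmR]; exact hF1
      linarith
    · exact div_nonneg (hF0 x) hmR.le
  have hp1 : ∑ a, p a = 1 := by
    rw [Fintype.sum_option]
    simp only [hp, Option.elim]
    rw [← Finset.sum_div]
    ring
  set g : Fin k → Option X → Bool := fun i a => a.elim false (f i) with hg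
  set q : Fin k → ℝ := fun i => ∑ a, (if g i a then p a else 0) with hq
  set lam : ℝ := ε / 800 with hlam
  set t : ℝ := m * (ε / 400) with ht
  have hl0 : 0 ≤ lam := by positivity
  have hl1 : lam ≤ 1 := by rw [hlam]; linarith
  set B : ℝ := Real.exp ((m : ℝ) * lam ^ 2 - lam * t) with hB
  set c : Fin k → (Fin m → Option X) → ℝ :=
    fun i ω => ∑ j, (if g i (ω j) then (1:ℝ) else 0) with hc
  -- q bounds
  have hq0 : ∀ i, 0 ≤ q i := fun i => Finset.sum_nonneg fun a _ => by
    by_cases h : g i a = true <;> simp [h, hp0 a]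
  have hq1 : ∀ i, q i ≤ 1 := fun i => by
    rw [← hp1]
    exact Finset.sum_le_sum fun a _ => by by_cases h : g i a = true <;> simp [h, hp0 a]
  -- the weight
  set w : (Fin m → Option X) → ℝ := fun ω => ∏ j, p (ω j) with hw
  have hw0 : ∀ ω, 0 ≤ w ω := fun ω => Finset.prod_nonneg fun j _ => hp0 _
  have hwsum : ∑ ω : Fin m → Option X, w ω = 1 := by
    have h2 := Finset.prod_univ_sum (fun _ : Fin m => (Finset.univ : Finset (Option X)))
      (fun _ a => p a)
    rw [Fintype.piFinset_univ] at h2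
    rw [hw, ← h2, hp1, Finset.prod_const, one_pow]
  -- event sets
  set Ap : Fin k → Finset (Fin m → Option X) := fun i =>
    Finset.univ.filter (fun ω : Fin m → Option X =>
      t ≤ ∑ j, ((if g i (ω j) then (1:ℝ) else 0) - ∑ a, (if g i a then p a else 0))) with hAp
  set Am : Fin k → Finset (Fin m → Option X) := fun i =>
    Finset.univ.filter (fun ω : Fin m → Option X =>
      t ≤ ∑ j, ((if (!(g i (ω j))) then (1:ℝ) else 0) -
        ∑ a, (if (!(g i a)) then p a else 0))) with hAm
  have hchp : ∀ i, ∑ ω ∈ Ap i, w ω ≤ B :=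
    fun i => chernoff_tail m p hp0 hp1 (g i) lam t hl0 hl1
  have hchm : ∀ i, ∑ ω ∈ Am i, w ω ≤ B :=
    fun i => chernoff_tail m p hp0 hp1 (fun a => !(g i a)) lam t hl0 hl1
  -- sum characterizations
  have hsump : ∀ i (ω : Fin m → Option X),
      ∑ j, ((if g i (ω j) then (1:ℝ) else 0) - ∑ a, (if g i a then p a else 0))
        = c i ω - m * q i := by
    intro i ω
    rw [Finset.sum_sub_distrib, Finset.sum_const, Finset.card_univ, Fintype.card_fin]
    rw [hc, hq]
    ring
  have hqneg : ∀ i, ∑ a, (if (!(g i a)) then p a else 0) = 1 - q i := by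
    intro i
    rw [hq, ← hp1, ← Finset.sum_sub_distrib]
    apply Finset.sum_congr rfl
    intro a _
    by_cases h : g i a = true <;> simp [h]
  have hsumm : ∀ i (ω : Fin m → Option X),
      ∑ j, ((if (!(g i (ω j))) then (1:ℝ) else 0) - ∑ a, (if (!(g i a)) then p a else 0))
        = m * q i - c i ω := by
    intro i ω
    rw [hqneg i]
    have : ∀ j : Fin m, ((if (!(g i (ω j))) then (1:ℝ) else 0) - (1 - q i))
        = q i - (if g i (ω j) then (1:ℝ) else 0) := by
      intro j
      by_cases h : g i (ω j) = true <;> simp [h]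
    rw [Finset.sum_congr rfl fun j _ => this j, Finset.sum_sub_distrib,
      Finset.sum_const, Finset.card_univ, Fintype.card_fin, hc]
    ring
  -- existence of a good sample
  have hgood : ∃ ω : Fin m → Option X, ∀ i, |c i ω - m * q i| ≤ t := by
    by_contra hcon
    push_neg at hcon
    -- every ω is in some Ap i or Am i
    have hcover : ∀ ω : Fin m → Option X, (1:ℝ) ≤
        ∑ i, ((if ω ∈ Ap i then (1:ℝ) else 0) + (if ω ∈ Am i then (1:ℝ) else 0)) := by
      intro ω
      obtain ⟨i, hi⟩ := hcon ω
      have hterm : (1:ℝ) ≤ (if ω ∈ Ap i then (1:ℝ) else 0) + (if ω ∈ Am i then (1:ℝ) else 0) := by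
        rcases le_or_gt (m * q i) (c i ω) with hcase | hcase
        · have : ω ∈ Ap i := by
            rw [hAp, Finset.mem_filter]
            refine ⟨Finset.mem_univ _, ?_⟩
            rw [hsump]
            rw [abs_of_nonneg (by linarith)] at hi
            linarith
          rw [if_pos this]
          have : (0:ℝ) ≤ (if ω ∈ Am i then (1:ℝ) else 0) := by positivity
          linarith
        · have : ω ∈ Am i := by
            rw [hAm, Finset.mem_filter]
            refine ⟨Finset.mem_univ _, ?_⟩
            rw [hsumm]
            rw [abs_of_neg (by linarith)] at hi
            linarith
          rw [if_pos this]
          have : (0:ℝ) ≤ (if ω ∈ Ap i then (1:ℝ) else 0) := by positivity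
          linarith
      calc (1:ℝ) ≤ _ := hterm
        _ ≤ _ := Finset.single_le_sum (f := fun i =>
            (if ω ∈ Ap i then (1:ℝ) else 0) + (if ω ∈ Am i then (1:ℝ) else 0))
            (fun i _ => by positivity) (Finset.mem_univ i)
    have hmain : (1:ℝ) ≤ (k:ℝ) * (2 * B) := by
      have h1 : (1:ℝ) ≤ ∑ ω : Fin m → Option X, w ω *
          ∑ i, ((if ω ∈ Ap i then (1:ℝ) else 0) + (if ω ∈ Am i then (1:ℝ) else 0)) := by
        calc (1:ℝ) = ∑ ω : Fin m → Option X, w ω := hwsum.symm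
          _ ≤ _ := ?_
        apply Finset.sum_le_sum
        intro ω _
        nth_rewrite 1 [← mul_one (w ω)]
        exact mul_le_mul_of_nonneg_left (hcover ω) (hw0 ω)
      have h2 : ∑ ω : Fin m → Option X, w ω *
          ∑ i, ((if ω ∈ Ap i then (1:ℝ) else 0) + (if ω ∈ Am i then (1:ℝ) else 0))
          = ∑ i, ((∑ ω ∈ Ap i, w ω) + (∑ ω ∈ Am i, w ω)) := by
        have e1 : ∀ ω : Fin m → Option X, w ω *
            ∑ i, ((if ω ∈ Ap i then (1:ℝ) else 0) + (if ω ∈ Am i then (1:ℝ) else 0))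
            = ∑ i, ((if ω ∈ Ap i then w ω else 0) + (if ω ∈ Am i then w ω else 0)) := by
          intro ω
          rw [Finset.mul_sum]
          refine Finset.sum_congr rfl fun i _ => ?_
          rw [mul_add, mul_ite, mul_one, mul_zero, mul_ite, mul_one, mul_zero]
        rw [Finset.sum_congr rfl fun ω _ => e1 ω, Finset.sum_comm]
        refine Finset.sum_congr rfl fun i _ => ?_
        rw [Finset.sum_add_distrib]
        congr 1
        · rw [Finset.sum_ite_mem, Finset.univ_inter]
        · rw [Finset.sum_ite_mem, Finset.univ_inter]
      have h3 : ∑ i, ((∑ ω ∈ Ap i, w ω) + (∑ ω ∈ Am i, w ω)) ≤ (k:ℝ) * (2 * B) := by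
        calc ∑ i, ((∑ ω ∈ Ap i, w ω) + (∑ ω ∈ Am i, w ω))
            ≤ ∑ _i : Fin k, 2 * B := Finset.sum_le_sum fun i _ => by
              have := hchp i; have := hchm i; linarith
          _ = (k:ℝ) * (2 * B) := by
              rw [Finset.sum_const, Finset.card_univ, Fintype.card_fin, nsmul_eq_mul]
        
      rw [h2] at h1
      linarith
    -- numeric contradiction
    have hL2 : Real.log 2 ≤ Real.log (2 * k) := by
      apply Real.log_le_log (by norm_num)
      have : (1:ℝ) ≤ (k:ℝ) := by exact_mod_cast hk
      nlinarith
    have hLpos : 0 < Real.log (2 * k) :=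
      lt_of_lt_of_le (Real.log_pos (by norm_num)) hL2
    have hme : 2 * Real.log (2 * k) ≤ (m:ℝ) * ε ^ 2 / 640000 := by
      have h1 : 1280000 * Real.log (2 * k) ≤ (m:ℝ) * ε ^ 2 := by
        rw [div_mul_eq_mul_div, div_le_iff₀ (pow_pos hε0 2)] at hm2
        linarith
      linarith
    have hBexp : B = Real.exp (-((m:ℝ) * ε ^ 2 / 640000)) := by
      rw [hB, hlam, ht]
      congr 1
      field_simp
      ring
    have hkR : (2:ℝ) ≤ 2 * (k:ℝ) := by
      have : (1:ℝ) ≤ (k:ℝ) := by exact_mod_cast hk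
      linarith
    have hBle : B ≤ ((2 * (k:ℝ)) ^ 2)⁻¹ := by
      rw [hBexp]
      have h1 : Real.exp (-((m:ℝ) * ε ^ 2 / 640000)) ≤ Real.exp (-(2 * Real.log (2 * k))) :=
        Real.exp_le_exp.2 (by linarith)
      refine h1.trans_eq ?_
      rw [Real.exp_neg]
      congr 1
      rw [two_mul, Real.exp_add, Real.exp_log (by linarith : (0:ℝ) < 2 * k)]
      ring
    have hfin : (k:ℝ) * (2 * B) ≤ 1/2 := by
      have hk2 : (0:ℝ) < 2 * (k:ℝ) := by linarith
      have : (k:ℝ) * (2 * B) ≤ (2 * k) * ((2 * (k:ℝ)) ^ 2)⁻¹ := by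
        have hB0 : 0 ≤ B := by rw [hB]; positivity
        nlinarith
      refine this.trans ?_
      rw [sq]
      rw [mul_inv]
      rw [← mul_assoc, mul_inv_cancel₀ (by linarith : (2 * (k:ℝ)) ≠ 0), one_mul]
      rw [inv_le_comm₀ (by linarith) (by norm_num)]
      norm_num
      linarith
    linarith
  obtain ⟨ω, hωgood⟩ := hgood
  -- define P
  set P : X → ℕ := fun x => (Finset.univ.filter (fun j : Fin m => ω j = some x)).card with hP
  have hPcast : ∀ x, ((P x : ℕ) : ℝ) = ∑ j, (if ω j = some x then (1:ℝ) else 0) := by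
    intro x
    rw [hP]
    simp only
    rw [Finset.card_filter]
    push_cast
    apply Finset.sum_congr rfl
    intro j _
    by_cases h : ω j = some x <;> simp [h]
  refine ⟨P, ?_, ?_⟩
  · -- total count ≤ m
    have : ∑ x, P x = ∑ j : Fin m, ∑ x, (if ω j = some x then 1 else 0) := by
      rw [Finset.sum_comm]
      apply Finset.sum_congr rfl
      intro x _
      rw [hP]
      simp only
      rw [Finset.card_filter]
    rw [this]
    calc ∑ j : Fin m, ∑ x, (if ω j = some x then 1 else 0)
        ≤ ∑ _j : Fin m, 1 := by
          apply Finset.sum_le_sum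
          intro j _
          rcases hj : ω j with _ | y
          · simp
          · simp only [hj, Option.some.injEq]
            rw [Finset.sum_ite_eq Finset.univ y (fun _ => 1)]
            simp
      _ = m := by simp
  · intro i
    -- query value identity
    have hci : ∑ x ∈ Finset.univ.filter (fun x => f i x = true), ((P x : ℕ) : ℝ) = c i ω := by
      rw [Finset.sum_congr rfl fun x _ => hPcast x]
      rw [Finset.sum_comm]
      rw [hc]
      apply Finset.sum_congr rfl
      intro j _
      rcases hj : ω j with _ | y
      · simp [hg]
      · rw [hg]
        simp only [Option.elim]
        rw [Finset.sum_filter]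
        have : ∀ x, (if f i x = true then (if (some y : Option X) = some x then (1:ℝ) else 0) else 0)
            = if x = y then (if f i y = true then (1:ℝ) else 0) else 0 := by
          intro x
          by_cases hxy : x = y
          · subst hxy; simp
          · have : (some y : Option X) ≠ some x := by simpa [eq_comm] using hxy
            simp [hxy, this]
        rw [Finset.sum_congr rfl fun x _ => this x]
        rw [Finset.sum_ite_eq' Finset.univ y]
        simp
        rfl
    have hqi : (m:ℝ) * q i = ∑ x ∈ Finset.univ.filter (fun x => f i x = true), F x := by
      rw [hq]
      simp only
      rw [Fintype.sum_option]
      have hnone : (if g i none then p none else 0) = 0 := by rw [hg]; simp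
      rw [hnone, zero_add]
      have : ∀ x : X, (if g i (some x) then p (some x) else 0)
          = (if f i x = true then F x else 0) / m := by
        intro x
        rw [hg, hp]
        simp only [Option.elim]
        by_cases h : f i x = true <;> simp [h]
      rw [Finset.sum_congr rfl fun x _ => this x, ← Finset.sum_div, ← Finset.sum_filter]
      field_simp
    have heq : histQuery m (f i) (fun x => ((P x : ℕ) : ℝ)) = (1/(m:ℝ)) * c i ω := by
      rw [histQuery, hci]
    have heq2 : histQuery m (f i) F = q i := by
      rw [histQuery, ← hqi]
      field_simp
    rw [heq, heq2]
    have hre : (1/(m:ℝ)) * c i ω - q i = (1/(m:ℝ)) * (c i ω - m * q i) := by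
      field_simp
    rw [hre, abs_mul, abs_of_nonneg (by positivity : (0:ℝ) ≤ 1/(m:ℝ))]
    calc (1/(m:ℝ)) * |c i ω - m * q i| ≤ (1/(m:ℝ)) * t :=
          mul_le_mul_of_nonneg_left (hωgood i) (by positivity)
      _ = ε/400 := by rw [ht]; field_simp

lemma choose_le_pow_succ (a b : ℕ) : (a + b).choose b ≤ (a + 1) ^ b := by
  induction b with
  | zero => simp
  | succ b ih =>
    have h1 := Nat.add_one_mul_choose_eq (a + b) b
    have h2 : (a + (b+1)).choose (b+1) * (b+1) = (a + b + 1) * (a + b).choose b := by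
      rw [show a + (b+1) = (a+b)+1 by omega]
      simpa [Nat.succ_eq_add_one] using h1.symm
    have h3 : (a + (b+1)).choose (b+1) * (b+1) ≤ ((a+1)^(b+1)) * (b+1) := by
      rw [h2]
      calc (a+b+1) * (a + b).choose b ≤ (a+b+1) * (a+1)^b :=
            Nat.mul_le_mul_left _ ih
        _ ≤ ((a+1)*(b+1)) * (a+1)^b := Nat.mul_le_mul_right _ (by nlinarith)
        _ = ((a+1)^(b+1)) * (b+1) := by ring
    exact Nat.le_of_mul_le_mul_right h3 (Nat.succ_pos b)


set_option maxHeartbeats 1000000 in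
/-- **Lemma 10 (goodVolumeLemma).** Let `N = |X| ≥ 2`, `ε ∈ (0,1)` and
`m ≥ (1280000/ε²)·ln(2k)`, and let `C₀ = {F ∈ ℝ^X : F ≥ 0, ∑_x F_x ≤ m}` be the set of
fractional histograms.  With `Good_{ε′}(F*) = {F ∈ C₀ : |f_i(F) − f_i(F*)| ≤ ε′ for all i}`,
the set of `F* ∈ C₀` with `Vol(Good_{ε/200}(F*)) < Vol(C₀)/N^{2m}` has Lebesgue measure at most
`(2/N)^m · Vol(C₀)`. -/
theorem good_volume_lemma {X : Type*} [Fintype X] (hN : 2 ≤ Fintype.card X)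
    (k : ℕ) (hk : 1 ≤ k) (f : Fin k → X → Bool)
    (ε : ℝ) (hε : 0 < ε ∧ ε < 1)
    (m : ℕ) (hm : 0 < m) (hm2 : (1280000 / ε ^ 2) * Real.log (2 * k) ≤ (m : ℝ)) :
    volume {Fstar : X → ℝ |
        ((∀ x, 0 ≤ Fstar x) ∧ ∑ x, Fstar x ≤ (m : ℝ)) ∧
        volume {F : X → ℝ | ((∀ x, 0 ≤ F x) ∧ ∑ x, F x ≤ (m : ℝ)) ∧
            ∀ i : Fin k, |histQuery m (f i) F - histQuery m (f i) Fstar| ≤ ε / 200} <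
          volume {F : X → ℝ | (∀ x, 0 ≤ F x) ∧ ∑ x, F x ≤ (m : ℝ)} /
            (Fintype.card X : ENNReal) ^ (2 * m)} ≤
      (2 / (Fintype.card X : ENNReal)) ^ m *
        volume {F : X → ℝ | (∀ x, 0 ≤ F x) ∧ ∑ x, F x ≤ (m : ℝ)} := by
  classical
  obtain ⟨hε0, hε1⟩ := hε
  set N := Fintype.card X with hNdef
  set V : ENNReal := volume {F : X → ℝ | (∀ x, 0 ≤ F x) ∧ ∑ x, F x ≤ (m : ℝ)} with hV
  set bound : ENNReal := V / (N : ENNReal) ^ (2*m) with hbound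
  set pt : Sym (Option X) m → X → ℝ :=
    fun s x => ((s : Multiset (Option X)).count (some x) : ℝ) with hpt
  set close : (X → ℝ) → Sym (Option X) m → Prop := fun F s =>
    ∀ i, |histQuery m (f i) (pt s) - histQuery m (f i) F| ≤ ε/400 with hclose
  have hexists : ∀ F : X → ℝ, (∀ x, 0 ≤ F x) → ∑ x, F x ≤ (m:ℝ) → ∃ s, close F s := by
    intro F hF0 hF1
    obtain ⟨P, hPm, hPq⟩ := rounding hk f hε0 hε1 hm hm2 F hF0 hF1
    set msum : Multiset (Option X) := ∑ x : X, Multiset.replicate (P x) (some x) with hmsum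
    set mall : Multiset (Option X) := Multiset.replicate (m - ∑ x, P x) none + msum with hmall
    have hcards : Multiset.card msum = ∑ x, P x := by
      rw [hmsum, Multiset.card_sum]
      simp [Multiset.card_replicate]
    have hcardall : Multiset.card mall = m := by
      rw [hmall, Multiset.card_add, Multiset.card_replicate, hcards]
      omega
    have hcount : ∀ x : X, mall.count (some x) = P x := by
      intro x
      rw [hmall, Multiset.count_add, Multiset.count_replicate, if_neg (by simp), zero_add,
        hmsum, Multiset.count_sum']
      have : ∀ y : X, (Multiset.replicate (P y) (some y : Option X)).count (some x)
          = if x = y then P y else 0 := by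
        intro y
        rw [Multiset.count_replicate]
        by_cases h : x = y
        · simp [h]
        · simp [h]
          intro hyx
          exact absurd hyx.symm h
      rw [Finset.sum_congr rfl fun y _ => this y, Finset.sum_ite_eq Finset.univ x P]
      simp
    refine ⟨⟨mall, hcardall⟩, ?_⟩
    have hpteq : pt ⟨mall, hcardall⟩ = fun x => (P x : ℝ) := by
      funext x
      rw [hpt]
      show ((mall.count (some x) : ℕ) : ℝ) = _
      rw [hcount x]
    show ∀ i, |histQuery m (f i) (pt ⟨mall, hcardall⟩) - histQuery m (f i) F| ≤ ε / 400
    simp only [hpteq]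
    exact hPq
  set c : (X → ℝ) → Sym (Option X) m := fun F =>
    if h : ∃ s, close F s then h.choose else Sym.replicate m none with hcfun
  set Cell : Sym (Option X) m → Set (X → ℝ) := fun s =>
    {F | ((∀ x, 0 ≤ F x) ∧ ∑ x, F x ≤ (m:ℝ)) ∧ c F = s ∧ close F s} with hCell
  set badIdx : Finset (Sym (Option X) m) :=
    Finset.univ.filter (fun s => volume (Cell s) < bound) with hbadIdx
  have hsub : {Fstar : X → ℝ |
        ((∀ x, 0 ≤ Fstar x) ∧ ∑ x, Fstar x ≤ (m : ℝ)) ∧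
        volume {F : X → ℝ | ((∀ x, 0 ≤ F x) ∧ ∑ x, F x ≤ (m : ℝ)) ∧
            ∀ i : Fin k, |histQuery m (f i) F - histQuery m (f i) Fstar| ≤ ε / 200} < bound}
      ⊆ ⋃ s ∈ badIdx, Cell s := by
    rintro Fstar ⟨hFC, hFv⟩
    have hEx : ∃ s, close Fstar s := hexists Fstar hFC.1 hFC.2
    have hcs : close Fstar (c Fstar) := by
      rw [hcfun]; simp only [dif_pos hEx]; exact hEx.choose_spec
    have hmem : Fstar ∈ Cell (c Fstar) := ⟨hFC, rfl, hcs⟩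
    have hsubGood : Cell (c Fstar) ⊆ {F : X → ℝ | ((∀ x, 0 ≤ F x) ∧ ∑ x, F x ≤ (m : ℝ)) ∧
        ∀ i : Fin k, |histQuery m (f i) F - histQuery m (f i) Fstar| ≤ ε / 200} := by
      rintro F ⟨hF1, hF2, hF3⟩
      refine ⟨hF1, fun i => ?_⟩
      have h1 := hF3 i
      have h2 := hcs i
      have htri := abs_sub_le (histQuery m (f i) F) (histQuery m (f i) (pt (c Fstar)))
        (histQuery m (f i) Fstar)
      have hcomm := abs_sub_comm (histQuery m (f i) (pt (c Fstar))) (histQuery m (f i) F)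
      linarith
    have hvol : volume (Cell (c Fstar)) < bound :=
      lt_of_le_of_lt (measure_mono hsubGood) hFv
    have hbm : c Fstar ∈ badIdx := by
      rw [hbadIdx, Finset.mem_filter]
      exact ⟨Finset.mem_univ _, hvol⟩
    exact Set.mem_biUnion hbm hmem
  -- counting
  have hcard : Fintype.card (Sym (Option X) m) ≤ 2^m * N^m := by
    rw [Sym.card_sym_eq_multichoose, Nat.multichoose_eq, Fintype.card_option]
    rw [show N + 1 + m - 1 = N + m by omega]
    calc (N+m).choose m ≤ (N+1)^m := choose_le_pow_succ N m
      _ ≤ (2*N)^m := Nat.pow_le_pow_left (by omega) m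
      _ = 2^m * N^m := by rw [mul_pow]
  have hN0 : (N:ENNReal) ≠ 0 := by
    simp only [ne_eq, Nat.cast_eq_zero]
    omega
  have hNt : (N:ENNReal) ≠ ⊤ := ENNReal.natCast_ne_top N
  have h1 : ((N:ENNReal))^m ≠ 0 := pow_ne_zero _ hN0
  have h2 : ((N:ENNReal))^m ≠ ⊤ := ENNReal.pow_ne_top hNt
  have harith : ((2^m * N^m : ℕ) : ENNReal) * bound = (2/(N:ENNReal))^m * V := by
    rw [hbound]
    push_cast
    calc ((2:ENNReal)^m * (N:ENNReal)^m) * (V / (N:ENNReal)^(2*m))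
        = (2:ENNReal)^m * (((N:ENNReal)^m)⁻¹ * V) * ((N:ENNReal)^m * ((N:ENNReal)^m)⁻¹) := by
          rw [two_mul, pow_add, div_eq_mul_inv, ENNReal.mul_inv (Or.inl h1) (Or.inl h2)]
          ring
      _ = (2:ENNReal)^m * (((N:ENNReal)^m)⁻¹ * V) := by
          rw [ENNReal.mul_inv_cancel h1 h2, mul_one]
      _ = (2/(N:ENNReal))^m * V := by
          rw [div_eq_mul_inv, mul_pow, ENNReal.inv_pow]
          ring
  calc volume {Fstar : X → ℝ |
        ((∀ x, 0 ≤ Fstar x) ∧ ∑ x, Fstar x ≤ (m : ℝ)) ∧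
        volume {F : X → ℝ | ((∀ x, 0 ≤ F x) ∧ ∑ x, F x ≤ (m : ℝ)) ∧
            ∀ i : Fin k, |histQuery m (f i) F - histQuery m (f i) Fstar| ≤ ε / 200} < bound}
      ≤ volume (⋃ s ∈ badIdx, Cell s) := measure_mono hsub
    _ ≤ ∑ s ∈ badIdx, volume (Cell s) := measure_biUnion_finset_le badIdx Cell
    _ ≤ ∑ _s ∈ badIdx, bound := Finset.sum_le_sum fun s hs =>
        le_of_lt (Finset.mem_filter.1 hs).2
    _ = (badIdx.card : ENNReal) * bound := by rw [Finset.sum_const, nsmul_eq_mul]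
    _ ≤ ((2^m * N^m : ℕ) : ENNReal) * bound := by
        apply mul_le_mul_left
        exact_mod_cast le_trans (Finset.card_le_univ badIdx) hcard
    _ = (2/(N:ENNReal))^m * V := harith
end

section
/- Let X be a finite set with N = |X| ≥ 2, let f_1,…,f_k : X → {0,1} be predicates with k ≥ 1, let ε ∈ (0,1), let m be a positive integer, and let d_1,…,d_k ∈ ℝ (the true query answers). Let C_0 = {F ∈ ℝ^X : F_x ≥ 0 for all x and ∑_x F_x ≤ m} and for F ∈ C_0 let f_i(F) = (1/m)·∑_{x : f_i(x)=1} F_x. Assume the volume condition Vol({F ∈ C_0 : |f_i(F) − d_i| ≤ ε/100 for all i}) ≥ Vol(C_0)/N^{2m}, where Vol is Lebesgue measure on ℝ^X. Let H ⊆ {1,…,k} and for each i ∈ H let a_i ∈ ℝ satisfy |d_i − a_i| ≤ ε/100. Define inductively C_i = {F ∈ C_{i−1} : |f_i(F) − a_i| ≤ ε/50} for i ∈ H and C_i = C_{i−1} for i ∉ H. Assume that for every i ∈ H, (1/Vol(C_{i−1}))·∫_{C_{i−1}} exp(−|f_i(F) − d_i|/ε) dF < 91/100. Then #H < 40·m·ln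 N. -/
open MeasureTheory

/-- **Deterministic content of Lemma 11 (fewDiscountsEfficient).** Queries are indexed by
`1,…,k` with true answers `d i`; `C 0 = {F ∈ ℝ^X : F ≥ 0, ∑_x F_x ≤ m}` is the polytope of
fractional histograms, `H ⊆ {1,…,k}` is the set of hard queries, each answered
`(ε/100)`-accurately by `a i`, and `C i` is obtained from `C (i−1)` by intersecting with the
`(ε/50)`-consistency constraint for hard `i` (and `C i = C (i−1)` otherwise).  Assume the
volume condition `Vol({F ∈ C₀ : |f_i(F) − d_i| ≤ ε/100 ∀i}) ≥ Vol(C₀)/N^{2m}` and that every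
hard query has easiness score `(1/Vol(C_{i−1})) · ∫_{C_{i−1}} exp(−|f_i(F) − d_i|/ε) dF`
below `91/100`.  Then the number of hard queries is less than `40·m·ln N`. -/
theorem few_hard_queries_efficient {X : Type*} [Fintype X] (hN : 2 ≤ Fintype.card X)
    (k : ℕ) (hk : 1 ≤ k) (f : ℕ → X → Bool)
    (ε : ℝ) (hε : 0 < ε ∧ ε < 1)
    (m : ℕ) (hm : 0 < m)
    (d : ℕ → ℝ)
    (C : ℕ → Set (X → ℝ))
    (hC0 : C 0 = {F : X → ℝ | (∀ x, 0 ≤ F x) ∧ ∑ x, F x ≤ (m : ℝ)})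
    (hvol : volume (C 0) / (Fintype.card X : ENNReal) ^ (2 * m) ≤
      volume {F ∈ C 0 | ∀ i ∈ Finset.Icc 1 k, |histQuery m (f i) F - d i| ≤ ε / 100})
    (H : Finset ℕ) (hH : H ⊆ Finset.Icc 1 k)
    (a : ℕ → ℝ) (ha : ∀ i ∈ H, |d i - a i| ≤ ε / 100)
    (hCstep : ∀ i ∈ Finset.Icc 1 k, ∀ F : X → ℝ,
      F ∈ C i ↔ F ∈ C (i - 1) ∧ (i ∈ H → |histQuery m (f i) F - a i| ≤ ε / 50))
    (hscore : ∀ i ∈ H,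
      (1 / (volume (C (i - 1))).toReal) *
          ∫ F in C (i - 1), Real.exp (-|histQuery m (f i) F - d i| / ε)
        < 91 / 100) :
    (H.card : ℝ) < 40 * (m : ℝ) * Real.log (Fintype.card X) := by
  obtain ⟨hε0, hε1⟩ := hε
  have hXne : Nonempty X := Fintype.card_pos_iff.mp (by omega)
  set N := Fintype.card X with hNdef
  have hN0 : (0:ℝ) < N := by positivity
  -- measurability of histQuery
  have hqmeas : ∀ i, Measurable (histQuery m (f i)) := by
    intro i
    unfold histQuery
    exact (Finset.measurable_sum _ fun x _ => measurable_pi_apply x).const_mul _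
  -- measurability of C 0
  have hmeas0 : MeasurableSet (C 0) := by
    rw [hC0]
    have h1 : MeasurableSet {F : X → ℝ | ∀ x, 0 ≤ F x} := by
      have : {F : X → ℝ | ∀ x, 0 ≤ F x} = ⋂ x, {F : X → ℝ | 0 ≤ F x} := by ext; simp
      rw [this]
      exact MeasurableSet.iInter fun x =>
        measurableSet_le measurable_const (measurable_pi_apply x)
    have h2 : MeasurableSet {F : X → ℝ | ∑ x, F x ≤ (m : ℝ)} :=
      measurableSet_le (Finset.measurable_sum _ fun x _ => measurable_pi_apply x)
        measurable_const
    exact (Set.setOf_and ..).symm ▸ h1.inter h2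
  -- measurability of C i
  have hmeas : ∀ i, i ≤ k → MeasurableSet (C i) := by
    intro i
    induction i with
    | zero => intro _; exact hmeas0
    | succ n ih =>
      intro hik
      have hmem : n + 1 ∈ Finset.Icc 1 k := Finset.mem_Icc.mpr ⟨by omega, hik⟩
      have hset : C (n+1) =
          C n ∩ {F | (n+1) ∈ H → |histQuery m (f (n+1)) F - a (n+1)| ≤ ε/50} := by
        ext F
        rw [Set.mem_inter_iff, hCstep (n+1) hmem F]
        rfl
      rw [hset]
      refine (ih (by omega)).inter ?_
      by_cases hH1 : (n+1) ∈ H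
      · have he : {F : X → ℝ | (n+1) ∈ H → |histQuery m (f (n+1)) F - a (n+1)| ≤ ε/50}
            = {F : X → ℝ | |histQuery m (f (n+1)) F - a (n+1)| ≤ ε/50} := by
          ext F; simp [hH1]
        rw [he]
        exact measurableSet_le ((hqmeas (n+1)).sub measurable_const).abs measurable_const
      · have he : {F : X → ℝ | (n+1) ∈ H → |histQuery m (f (n+1)) F - a (n+1)| ≤ ε/50}
            = Set.univ := by
          ext F; simp [hH1]
        rw [he]
        exact MeasurableSet.univ
  -- chain
  have hchain : ∀ i, i ≤ k → C i ⊆ C 0 := by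
    intro i
    induction i with
    | zero => intro _; exact subset_rfl
    | succ n ih =>
      intro h F hF
      exact ih (by omega)
        (((hCstep (n+1) (Finset.mem_Icc.mpr ⟨by omega, h⟩) F).mp hF).1)
  -- the good set is inside every C i
  set G := {F ∈ C 0 | ∀ i ∈ Finset.Icc 1 k, |histQuery m (f i) F - d i| ≤ ε / 100} with hGdef
  have hGC : ∀ i, i ≤ k → G ⊆ C i := by
    intro i
    induction i with
    | zero => intro _ F hF; exact hF.1
    | succ n ih =>
      intro hik F hF
      rw [hCstep (n+1) (Finset.mem_Icc.mpr ⟨by omega, hik⟩) F]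
      refine ⟨ih (by omega) hF, fun hmem => ?_⟩
      have h1 := hF.2 (n+1) (Finset.mem_Icc.mpr ⟨by omega, hik⟩)
      have h2 := ha (n+1) hmem
      have : |histQuery m (f (n+1)) F - a (n+1)|
          ≤ |histQuery m (f (n+1)) F - d (n+1)| + |d (n+1) - a (n+1)| := by
        calc |histQuery m (f (n+1)) F - a (n+1)|
            = |(histQuery m (f (n+1)) F - d (n+1)) + (d (n+1) - a (n+1))| := by ring_nf
          _ ≤ _ := abs_add_le _ _
      linarith
  -- finiteness of volume of C 0
  have hfin0 : volume (C 0) < ⊤ := by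
    have hsub : C 0 ⊆ Set.univ.pi (fun _ : X => Set.Icc (0:ℝ) m) := by
      rw [hC0]
      intro F hF x _
      exact ⟨hF.1 x,
        le_trans (Finset.single_le_sum (fun y _ => hF.1 y) (Finset.mem_univ x)) hF.2⟩
    calc volume (C 0) ≤ volume (Set.univ.pi fun _ : X => Set.Icc (0:ℝ) m) :=
          measure_mono hsub
      _ = ∏ _i : X, volume (Set.Icc (0:ℝ) m) := volume_pi_pi _
      _ < ⊤ := by
          rw [Finset.prod_const, Real.volume_Icc]
          exact ENNReal.pow_lt_top ENNReal.ofReal_lt_top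
  -- positivity of volume of C 0
  have hpos0 : 0 < volume (C 0) := by
    have hsub : Set.univ.pi (fun _ : X => Set.Ioo (0:ℝ) ((m:ℝ) / N)) ⊆ C 0 := by
      rw [hC0]
      intro F hF
      refine ⟨fun x => (hF x (Set.mem_univ x)).1.le, ?_⟩
      have hlt : ∑ x, F x < ∑ _x : X, (m:ℝ)/N :=
        Finset.sum_lt_sum_of_nonempty Finset.univ_nonempty
          (fun x _ => (hF x (Set.mem_univ x)).2)
      have hsum : ∑ _x : X, (m:ℝ)/N = (m:ℝ) := by
        rw [Finset.sum_const, nsmul_eq_mul]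
        field_simp
        simp [Finset.card_univ, hNdef]
      linarith [hlt, hsum.le]
    have : (0:ENNReal) < volume (Set.univ.pi fun _ : X => Set.Ioo (0:ℝ) ((m:ℝ)/N)) := by
      rw [volume_pi_pi, Finset.prod_const, Real.volume_Ioo]
      have : (0:ℝ) < (m:ℝ)/N := by positivity
      exact ENNReal.pow_pos (by simp [ENNReal.ofReal_pos]; linarith) _
    exact lt_of_lt_of_le this (measure_mono hsub)
  -- positivity of G
  have hGpos : 0 < volume G := by
    refine lt_of_lt_of_le ?_ hvol
    exact ENNReal.div_pos hpos0.ne' (ENNReal.pow_ne_top (ENNReal.natCast_ne_top N))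
  -- volumes along chain
  have hfinI : ∀ i, i ≤ k → volume (C i) < ⊤ :=
    fun i hi => lt_of_le_of_lt (measure_mono (hchain i hi)) hfin0
  have hposI : ∀ i, i ≤ k → 0 < volume (C i) :=
    fun i hi => lt_of_lt_of_le hGpos (measure_mono (hGC i hi))
  -- per-step volume shrinkage for hard queries
  have hstep : ∀ i ∈ H,
      (volume (C i)).toReal ≤ (91/97) * (volume (C (i-1))).toReal := by
    intro i hiH
    have hik : i ∈ Finset.Icc 1 k := hH hiH
    obtain ⟨hi1, hik'⟩ := Finset.mem_Icc.mp hik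
    have hi1k : i - 1 ≤ k := by omega
    set g : (X → ℝ) → ℝ := fun F => Real.exp (-|histQuery m (f i) F - d i| / ε) with hg
    have hgmeas : Measurable g :=
      Real.measurable_exp.comp ((((hqmeas i).sub measurable_const).abs.neg).div_const ε)
    have hg0 : ∀ F, 0 ≤ g F := fun F => (Real.exp_pos _).le
    have hg1 : ∀ F, g F ≤ 1 := by
      intro F
      rw [hg]
      apply Real.exp_le_one_iff.mpr
      apply div_nonpos_of_nonpos_of_nonneg
      · simp [abs_nonneg]
      · exact hε0.le
    have hint : IntegrableOn g (C (i-1)) volume := by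
      refine Integrable.mono' (g := fun _ => (1:ℝ))
        (integrableOn_const (hfinI (i-1) hi1k).ne)
        hgmeas.aestronglyMeasurable ?_
      filter_upwards with F
      rw [Real.norm_eq_abs, abs_of_nonneg (hg0 F)]
      exact hg1 F
    have hCisub : C i ⊆ C (i-1) := fun F hF => ((hCstep i hik F).mp hF).1
    have hvpos : 0 < (volume (C (i-1))).toReal :=
      ENNReal.toReal_pos (hposI (i-1) hi1k).ne' (hfinI (i-1) hi1k).ne
    have hlow : (97/100) * (volume (C i)).toReal ≤ ∫ F in C (i-1), g F := by
      have h1 : ∫ _F in C i, (97/100 : ℝ) ≤ ∫ F in C i, g F := by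
        refine setIntegral_mono_on (integrableOn_const (hfinI i hik').ne)
          (hint.mono_set hCisub) (hmeas i hik') ?_
        intro F hF
        have hq := ((hCstep i hik F).mp hF).2 hiH
        have hd := ha i hiH
        have habs : |histQuery m (f i) F - d i| ≤ 3*ε/100 := by
          have : |histQuery m (f i) F - d i|
              ≤ |histQuery m (f i) F - a i| + |d i - a i| := by
            calc |histQuery m (f i) F - d i|
                = |(histQuery m (f i) F - a i) + -(d i - a i)| := by ring_nf
              _ ≤ |histQuery m (f i) F - a i| + |-(d i - a i)| := abs_add_le _ _
              _ = |histQuery m (f i) F - a i| + |d i - a i| := by rw [abs_neg]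
          linarith
        have hexp : -(3/100 : ℝ) ≤ -|histQuery m (f i) F - d i| / ε := by
          rw [neg_div, neg_le_neg_iff, div_le_iff₀ hε0]
          linarith
        calc (97/100:ℝ) = -(3/100) + 1 := by norm_num
          _ ≤ Real.exp (-(3/100)) := Real.add_one_le_exp _
          _ ≤ g F := Real.exp_le_exp.mpr hexp
      rw [setIntegral_const, smul_eq_mul, measureReal_def] at h1
      have h2 : ∫ F in C i, g F ≤ ∫ F in C (i-1), g F :=
        setIntegral_mono_set hint (ae_of_all _ hg0) (HasSubset.Subset.eventuallyLE hCisub)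
      linarith
    have hup : ∫ F in C (i-1), g F < (91/100) * (volume (C (i-1))).toReal := by
      have h := hscore i hiH
      rw [one_div, inv_mul_eq_div, div_lt_iff₀ hvpos] at h
      calc ∫ F in C (i-1), g F
          < 91 / 100 * (volume (C (i - 1))).toReal := h
        _ = (91/100) * (volume (C (i-1))).toReal := by norm_num
    linarith
  -- inductive volume bound
  have hind : ∀ i, i ≤ k →
      (volume (C i)).toReal
        ≤ (91/97:ℝ)^((H ∩ Finset.Icc 1 i).card) * (volume (C 0)).toReal := by
    intro i
    induction i with
    | zero => intro _; simp
    | succ n ih =>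
      intro h
      have hn := ih (by omega)
      by_cases hmem : (n+1) ∈ H
      · have hins : H ∩ Finset.Icc 1 (n+1) = insert (n+1) (H ∩ Finset.Icc 1 n) := by
          ext j
          simp only [Finset.mem_inter, Finset.mem_Icc, Finset.mem_insert]
          constructor
          · rintro ⟨hjH, h1, h2⟩
            rcases eq_or_ne j (n+1) with hje | hje
            · exact Or.inl hje
            · exact Or.inr ⟨hjH, h1, by omega⟩
          · rintro (rfl | ⟨hjH, h1, h2⟩)
            · exact ⟨hmem, by omega, le_refl _⟩
            · exact ⟨hjH, h1, by omega⟩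
        have hnotmem : (n+1) ∉ H ∩ Finset.Icc 1 n := by
          intro hc
          simp only [Finset.mem_inter, Finset.mem_Icc] at hc
          omega
        have hcard : (H ∩ Finset.Icc 1 (n+1)).card = (H ∩ Finset.Icc 1 n).card + 1 := by
          rw [hins, Finset.card_insert_of_notMem hnotmem]
        have hs := hstep (n+1) hmem
        rw [hcard, pow_succ]
        have h91 : (91/97:ℝ) * (volume (C n)).toReal
            ≤ (91/97:ℝ) * ((91/97:ℝ)^((H ∩ Finset.Icc 1 n).card) * (volume (C 0)).toReal) :=
          mul_le_mul_of_nonneg_left hn (by norm_num)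
        calc (volume (C (n+1))).toReal ≤ (91/97:ℝ) * (volume (C n)).toReal := hs
          _ ≤ (91/97:ℝ) * ((91/97:ℝ)^((H ∩ Finset.Icc 1 n).card) * (volume (C 0)).toReal) := h91
          _ = (91/97:ℝ)^((H ∩ Finset.Icc 1 n).card) * (91/97:ℝ) * (volume (C 0)).toReal := by ring
      · have hceq : H ∩ Finset.Icc 1 (n+1) = H ∩ Finset.Icc 1 n := by
          ext j
          simp only [Finset.mem_inter, Finset.mem_Icc]
          constructor
          · rintro ⟨hjH, h1, h2⟩
            rcases eq_or_ne j (n+1) with rfl | hje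
            · exact absurd hjH hmem
            · exact ⟨hjH, h1, by omega⟩
          · rintro ⟨hjH, h1, h2⟩
            exact ⟨hjH, h1, by omega⟩
        have hCeq : C (n+1) = C n := by
          ext F
          rw [hCstep (n+1) (Finset.mem_Icc.mpr ⟨by omega, h⟩) F]
          simp [hmem]
        rw [hceq, hCeq]
        exact hn
  -- final inequality
  have hHeq : H ∩ Finset.Icc 1 k = H := Finset.inter_eq_left.mpr hH
  have h1 : volume (C 0) / (N:ENNReal)^(2*m) ≤ volume (C k) :=
    le_trans hvol (measure_mono (hGC k le_rfl))
  have hfink : volume (C k) ≠ ⊤ := (hfinI k le_rfl).ne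
  have h2 := ENNReal.toReal_mono hfink h1
  rw [ENNReal.toReal_div] at h2
  have hNpow : (((N:ENNReal))^(2*m)).toReal = (N:ℝ)^(2*m) := by
    simp [ENNReal.toReal_pow]
  rw [hNpow] at h2
  have hkbound := hind k le_rfl
  rw [hHeq] at hkbound
  have hcomb : (volume (C 0)).toReal / (N:ℝ)^(2*m)
      ≤ (91/97:ℝ)^H.card * (volume (C 0)).toReal := le_trans h2 hkbound
  set v0 := (volume (C 0)).toReal with hv0def
  have hv0 : 0 < v0 := ENNReal.toReal_pos hpos0.ne' hfin0.ne
  have hA : (0:ℝ) < (N:ℝ)^(2*m) := by positivity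
  have h3 : ((N:ℝ)^(2*m))⁻¹ ≤ (91/97:ℝ)^H.card := by
    refine le_of_mul_le_mul_right ?_ hv0
    calc ((N:ℝ)^(2*m))⁻¹ * v0 = v0 / (N:ℝ)^(2*m) := by
          rw [mul_comm, div_eq_mul_inv]
      _ ≤ (91/97:ℝ)^H.card * v0 := hcomb
  have h4 : Real.log (((N:ℝ)^(2*m))⁻¹) ≤ Real.log ((91/97:ℝ)^H.card) :=
    Real.log_le_log (by positivity) h3
  rw [Real.log_inv, Real.log_pow, Real.log_pow] at h4
  have hlogr : Real.log (91/97:ℝ) ≤ -(6/97) := by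
    have := Real.log_le_sub_one_of_pos (by norm_num : (0:ℝ) < 91/97)
    linarith
  have hcard0 : (0:ℝ) ≤ (H.card : ℝ) := Nat.cast_nonneg _
  have hmul : (H.card:ℝ) * Real.log (91/97:ℝ) ≤ (H.card:ℝ) * (-(6/97)) :=
    mul_le_mul_of_nonneg_left hlogr hcard0
  have hlogN : 0 < Real.log (N:ℝ) := Real.log_pos (by exact_mod_cast Nat.lt_of_lt_of_le one_lt_two hN)
  have hm1 : (1:ℝ) ≤ (m:ℝ) := by exact_mod_cast hm
  have hmlog : Real.log (N:ℝ) ≤ (m:ℝ) * Real.log (N:ℝ) :=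
    le_mul_of_one_le_left hlogN.le hm1
  push_cast at h4
  linarith
end

section
/- Let d ≥ 1 be an integer and let K = {x ∈ ℝ^d : x_i ≥ 0 for all i and ∑_{i=1}^d x_i ≤ 1} be the solid standard simplex. Then (1/Vol(K))·∫_K (∑_{i=1}^d x_i²)/(∑_{i=1}^d x_i)² dx = 2/(d+1). (The integrand is defined almost everywhere on K.) -/
open MeasureTheory Real Set ENNReal

namespace SimplexCollisionAux

/-! ### One-dimensional facts -/

lemma integrableOn_pow_exp (n : ℕ) {s : ℝ} (hs : 0 ≤ s) :
    IntegrableOn (fun t : ℝ => t ^ n * Real.exp (-t)) (Ioi s) := by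
  have h := Real.GammaIntegral_convergent (s := (n + 1 : ℝ)) (by positivity)
  have h2 : IntegrableOn (fun t : ℝ => t ^ n * Real.exp (-t)) (Ioi (0:ℝ)) := by
    refine h.congr_fun (fun t ht => ?_) measurableSet_Ioi
    beta_reduce
    rw [add_sub_cancel_right, Real.rpow_natCast, mul_comm]
  exact h2.mono_set (Ioi_subset_Ioi hs)

lemma integral_pow_exp_zero (n : ℕ) :
    ∫ t in Ioi (0:ℝ), t ^ n * Real.exp (-t) = (Nat.factorial n : ℝ) := by
  have h := Real.Gamma_eq_integral (s := (n + 1 : ℝ)) (by positivity)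
  rw [Real.Gamma_nat_eq_factorial] at h
  rw [h]
  refine setIntegral_congr_fun measurableSet_Ioi fun t ht => ?_
  rw [add_sub_cancel_right, Real.rpow_natCast, mul_comm]

lemma lintegral_pow_exp (n : ℕ) :
    ∫⁻ t in Ioi (0:ℝ), ENNReal.ofReal (t ^ n * Real.exp (-t)) = (Nat.factorial n : ℝ≥0∞) := by
  rw [← ofReal_integral_eq_lintegral_ofReal (integrableOn_pow_exp n le_rfl)
    ((ae_restrict_mem measurableSet_Ioi).mono fun t ht => by
      have h0 : (0:ℝ) < t := ht; positivity),
    integral_pow_exp_zero, ENNReal.ofReal_natCast]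

lemma hasDerivAt_exp_neg (t : ℝ) :
    HasDerivAt (fun t : ℝ => Real.exp (-t)) (-Real.exp (-t)) t := by
  simpa using (hasDerivAt_neg' t).exp

lemma I1 {s : ℝ} (hs : 0 ≤ s) :
    ∫ t in Ioi s, t * Real.exp (-t) = (s + 1) * Real.exp (-s) := by
  have key : ∀ t : ℝ, HasDerivAt (fun t : ℝ => -((t + 1) * Real.exp (-t)))
      (t * Real.exp (-t)) t := by
    intro t
    have hp : HasDerivAt (fun t : ℝ => t + 1) 1 t := (hasDerivAt_id t).add_const 1
    have := (hp.mul (hasDerivAt_exp_neg t)).neg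
    exact this.congr_deriv (by ring)
  have tend : Filter.Tendsto (fun t : ℝ => -((t + 1) * Real.exp (-t)))
      Filter.atTop (nhds 0) := by
    have h1 := Real.tendsto_pow_mul_exp_neg_atTop_nhds_zero 1
    have h0 := Real.tendsto_pow_mul_exp_neg_atTop_nhds_zero 0
    have h := (h1.add h0).neg
    simp only [pow_one, pow_zero, one_mul, neg_zero, add_zero] at h
    refine h.congr fun t => by ring
  have h := integral_Ioi_of_hasDerivAt_of_tendsto (a := s)
    (key s).continuousAt.continuousWithinAt (fun x _ => key x)
    (by simpa using integrableOn_pow_exp 1 hs) tend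
  rw [h]; ring

lemma I2 {s : ℝ} (hs : 0 ≤ s) :
    ∫ t in Ioi s, t ^ 2 * Real.exp (-t) = (s ^ 2 + 2 * s + 2) * Real.exp (-s) := by
  have key : ∀ t : ℝ, HasDerivAt (fun t : ℝ => -((t ^ 2 + 2 * t + 2) * Real.exp (-t)))
      (t ^ 2 * Real.exp (-t)) t := by
    intro t
    have hp : HasDerivAt (fun t : ℝ => t ^ 2 + 2 * t + 2) (2 * t + 2) t := by
      have := ((hasDerivAt_pow 2 t).add (((hasDerivAt_id t).const_mul 2))).add_const 2
      exact this.congr_deriv (by norm_num)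
    have := (hp.mul (hasDerivAt_exp_neg t)).neg
    exact this.congr_deriv (by ring)
  have tend : Filter.Tendsto (fun t : ℝ => -((t ^ 2 + 2 * t + 2) * Real.exp (-t)))
      Filter.atTop (nhds 0) := by
    have h2 := Real.tendsto_pow_mul_exp_neg_atTop_nhds_zero 2
    have h1 := Real.tendsto_pow_mul_exp_neg_atTop_nhds_zero 1
    have h0 := Real.tendsto_pow_mul_exp_neg_atTop_nhds_zero 0
    have h := ((h2.add ((h1.const_mul 2))).add (h0.const_mul 2)).neg
    simp only [pow_one, pow_zero, mul_one, mul_zero, neg_zero, add_zero] at h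
    refine h.congr fun t => by ring
  have h := integral_Ioi_of_hasDerivAt_of_tendsto (a := s)
    (key s).continuousAt.continuousWithinAt (fun x _ => key x)
    (integrableOn_pow_exp 2 hs) tend
  rw [h]; ring

lemma psi0 {s : ℝ} (hs : 0 ≤ s) :
    ∫⁻ t in Ioi s, ENNReal.ofReal (t ^ 0 * Real.exp (-t)) = ENNReal.ofReal (Real.exp (-s)) := by
  rw [← ofReal_integral_eq_lintegral_ofReal (by simpa [IntegrableOn] using integrableOn_pow_exp 0 hs)
    ((ae_restrict_mem measurableSet_Ioi).mono fun t ht => by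
      have h0 : (0:ℝ) < t := lt_of_le_of_lt hs ht; positivity)]
  congr 1
  simpa using integral_exp_neg_Ioi s

lemma psi1 {s : ℝ} (hs : 0 ≤ s) :
    ∫⁻ t in Ioi s, ENNReal.ofReal (t ^ 1 * Real.exp (-t)) =
      ENNReal.ofReal ((s + 1) * Real.exp (-s)) := by
  rw [← ofReal_integral_eq_lintegral_ofReal (integrableOn_pow_exp 1 hs)
    ((ae_restrict_mem measurableSet_Ioi).mono fun t ht => by
      have h0 : (0:ℝ) < t := lt_of_le_of_lt hs ht; positivity)]
  rw [show (fun t : ℝ => t ^ 1 * Real.exp (-t)) = fun t : ℝ => t * Real.exp (-t) by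
    funext t; rw [pow_one], I1 hs]

lemma psi2 {s : ℝ} (hs : 0 ≤ s) :
    ∫⁻ t in Ioi s, ENNReal.ofReal (t ^ 2 * Real.exp (-t)) =
      ENNReal.ofReal ((s ^ 2 + 2 * s + 2) * Real.exp (-s)) := by
  rw [← ofReal_integral_eq_lintegral_ofReal (integrableOn_pow_exp 2 hs)
    ((ae_restrict_mem measurableSet_Ioi).mono fun t ht => by
      have h0 : (0:ℝ) < t := lt_of_le_of_lt hs ht; positivity), I2 hs]

/-! ### Measurability and null sets -/

variable {d : ℕ}

lemma measurable_S : Measurable (fun x : Fin d → ℝ => ∑ i, x i) :=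
  Finset.measurable_sum _ fun i _ => measurable_pi_apply i

lemma mA : MeasurableSet {x : Fin d → ℝ | ∀ i, 0 ≤ x i} := by
  have : {x : Fin d → ℝ | ∀ i, 0 ≤ x i} = ⋂ i, {x | 0 ≤ x i} := by ext; simp
  rw [this]
  exact MeasurableSet.iInter fun i => measurableSet_le measurable_const (measurable_pi_apply i)

lemma mKlt (t : ℝ) : MeasurableSet {x : Fin d → ℝ | (∀ i, 0 ≤ x i) ∧ ∑ i, x i < t} := by
  rw [Set.setOf_and]
  exact mA.inter (measurableSet_lt measurable_S measurable_const)

lemma mK : MeasurableSet {x : Fin d → ℝ | (∀ i, 0 ≤ x i) ∧ ∑ i, x i ≤ 1} := by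
  rw [Set.setOf_and]
  exact mA.inter (measurableSet_le measurable_S measurable_const)

lemma hyperplane_null (hd : 1 ≤ d) (c : ℝ) :
    volume {x : Fin d → ℝ | ∑ i, x i = c} = 0 := by
  classical
  set L : (Fin d → ℝ) →ₗ[ℝ] ℝ := ∑ i, LinearMap.proj i with hL
  have hLx : ∀ x : Fin d → ℝ, L x = ∑ i, x i := fun x => by
    simp [hL, LinearMap.sum_apply]
  have i0 : Fin d := ⟨0, hd⟩
  have hker : LinearMap.ker L ≠ ⊤ := by
    intro h
    have : L (Pi.single i0 1) = 0 := by
      rw [← LinearMap.mem_ker, h]; trivial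
    rw [hLx] at this
    simp [Finset.sum_pi_single'] at this
  have h0 : volume {x : Fin d → ℝ | ∑ i, x i = 0} = 0 := by
    have : {x : Fin d → ℝ | ∑ i, x i = 0} = (LinearMap.ker L : Set (Fin d → ℝ)) := by
      ext x; simp [LinearMap.mem_ker, hLx]
    rw [this]
    exact Measure.addHaar_submodule volume _ hker
  have hd0 : (d : ℝ) ≠ 0 := by positivity
  set w : Fin d → ℝ := fun _ => -c / d with hw
  have hSw : ∑ i, w i = -c := by
    simp [hw, Finset.sum_const, mul_comm]
    field_simp
  have hpre : (fun x : Fin d → ℝ => x + w) ⁻¹' {x | ∑ i, x i = 0} =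
      {x : Fin d → ℝ | ∑ i, x i = c} := by
    ext x
    simp only [mem_preimage, mem_setOf_eq, Pi.add_apply, Finset.sum_add_distrib, hSw]
    constructor <;> intro h <;> linarith
  rw [← hpre, measure_preimage_add_right]
  exact h0

lemma Klt_ae_K (hd : 1 ≤ d) :
    {x : Fin d → ℝ | (∀ i, 0 ≤ x i) ∧ ∑ i, x i < 1} =ᵐ[volume]
      {x : Fin d → ℝ | (∀ i, 0 ≤ x i) ∧ ∑ i, x i ≤ 1} := by
  rw [Filter.eventuallyEq_set]
  have h : ∀ᵐ x : Fin d → ℝ, ¬ (∑ i, x i = 1) := by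
    rw [ae_iff]; simpa using hyperplane_null hd 1
  filter_upwards [h] with x hx
  constructor
  · rintro ⟨h1, h2⟩; exact ⟨h1, le_of_lt h2⟩
  · rintro ⟨h1, h2⟩; exact ⟨h1, lt_of_le_of_ne h2 hx⟩

/-! ### Scaling -/

lemma scaling (hd : 1 ≤ d) (f : (Fin d → ℝ) → ℝ≥0∞) (hf : Measurable f)
    (hom : ∀ c : ℝ, 0 < c → ∀ x, f (c • x) = f x) {t : ℝ} (ht : 0 < t) :
    ∫⁻ x in {x : Fin d → ℝ | (∀ i, 0 ≤ x i) ∧ ∑ i, x i < t}, f x =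
      ENNReal.ofReal (t ^ d) *
        ∫⁻ x in {x : Fin d → ℝ | (∀ i, 0 ≤ x i) ∧ ∑ i, x i ≤ 1}, f x := by
  have hti : (0:ℝ) < t⁻¹ := inv_pos.2 ht
  have hpre : (t⁻¹ • · : (Fin d → ℝ) → Fin d → ℝ) ⁻¹'
      {x : Fin d → ℝ | (∀ i, 0 ≤ x i) ∧ ∑ i, x i < 1} =
      {x : Fin d → ℝ | (∀ i, 0 ≤ x i) ∧ ∑ i, x i < t} := by
    ext x
    simp only [mem_preimage, mem_setOf_eq, Pi.smul_apply, smul_eq_mul, ← Finset.mul_sum]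
    rw [inv_mul_eq_div, div_lt_one ht]
    constructor
    · rintro ⟨h1, h2⟩
      exact ⟨fun i => nonneg_of_mul_nonneg_right (h1 i) hti, h2⟩
    · rintro ⟨h1, h2⟩
      exact ⟨fun i => mul_nonneg hti.le (h1 i), h2⟩
  have hmape : Measure.map (t⁻¹ • · : (Fin d → ℝ) → Fin d → ℝ) volume =
      ENNReal.ofReal (t ^ d) • volume := by
    rw [Measure.map_addHaar_smul volume (ne_of_gt hti)]
    congr 2
    rw [Module.finrank_pi ℝ, Fintype.card_fin, inv_pow, inv_inv,
      abs_of_pos (pow_pos ht d)]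
  calc
    ∫⁻ x in {x : Fin d → ℝ | (∀ i, 0 ≤ x i) ∧ ∑ i, x i < t}, f x
      = ∫⁻ x in (t⁻¹ • · : (Fin d → ℝ) → Fin d → ℝ) ⁻¹'
          {x : Fin d → ℝ | (∀ i, 0 ≤ x i) ∧ ∑ i, x i < 1}, f (t⁻¹ • x) := by
        rw [hpre]
        exact setLIntegral_congr_fun (mKlt t)
          (fun x _ => (hom t⁻¹ hti x).symm)
    _ = ∫⁻ y in {x : Fin d → ℝ | (∀ i, 0 ≤ x i) ∧ ∑ i, x i < 1}, f y
          ∂(Measure.map (t⁻¹ • · : (Fin d → ℝ) → Fin d → ℝ) volume) := by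
        rw [Measure.restrict_map ((continuous_const_smul t⁻¹).measurable) (mKlt 1),
          lintegral_map hf ((continuous_const_smul t⁻¹).measurable)]
    _ = ENNReal.ofReal (t ^ d) *
          ∫⁻ y in {x : Fin d → ℝ | (∀ i, 0 ≤ x i) ∧ ∑ i, x i < 1}, f y := by
        rw [hmape, Measure.restrict_smul, lintegral_smul_measure, smul_eq_mul]
    _ = ENNReal.ofReal (t ^ d) *
          ∫⁻ y in {x : Fin d → ℝ | (∀ i, 0 ≤ x i) ∧ ∑ i, x i ≤ 1}, f y := by
        rw [setLIntegral_congr (Klt_ae_K hd)]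

/-! ### Layer-cake -/

lemma measurable_w (n : ℕ) : Measurable fun t : ℝ => ENNReal.ofReal (t ^ n * Real.exp (-t)) := by
  exact ENNReal.measurable_ofReal.comp
    ((measurable_id.pow_const n).mul (Real.measurable_exp.comp measurable_neg))

lemma layer (hd : 1 ≤ d) (f : (Fin d → ℝ) → ℝ≥0∞) (hf : Measurable f)
    (hom : ∀ c : ℝ, 0 < c → ∀ x, f (c • x) = f x) (n : ℕ) :
    ∫⁻ x in {x : Fin d → ℝ | ∀ i, 0 ≤ x i},
        f x * ∫⁻ t in Ioi (∑ i, x i), ENNReal.ofReal (t ^ n * Real.exp (-t)) =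
      (∫⁻ x in {x : Fin d → ℝ | (∀ i, 0 ≤ x i) ∧ ∑ i, x i ≤ 1}, f x) *
        (Nat.factorial (n + d) : ℝ≥0∞) := by
  classical
  set C := ∫⁻ x in {x : Fin d → ℝ | (∀ i, 0 ≤ x i) ∧ ∑ i, x i ≤ 1}, f x with hC
  set F : (Fin d → ℝ) × ℝ → ℝ≥0∞ := fun p =>
    {p : (Fin d → ℝ) × ℝ | ∑ i, p.1 i < p.2}.indicator
      (fun p => f p.1 * ENNReal.ofReal (p.2 ^ n * Real.exp (-p.2))) p with hF
  have mlt : MeasurableSet {p : (Fin d → ℝ) × ℝ | ∑ i, p.1 i < p.2} :=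
    measurableSet_lt (measurable_S.comp measurable_fst) measurable_snd
  have hmeasF : Measurable F :=
    Measurable.indicator ((hf.comp measurable_fst).mul
      (ENNReal.measurable_ofReal.comp
        (((measurable_snd.pow_const n).mul
          (Real.measurable_exp.comp measurable_snd.neg))))) mlt
  have step1 : ∀ x : Fin d → ℝ, x ∈ {x : Fin d → ℝ | ∀ i, 0 ≤ x i} →
      f x * (∫⁻ t in Ioi (∑ i, x i), ENNReal.ofReal (t ^ n * Real.exp (-t))) =
        ∫⁻ t in Ioi (0:ℝ), F (x, t) := by
    intro x hx
    have hSx : (0:ℝ) ≤ ∑ i, x i := Finset.sum_nonneg fun i _ => hx i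
    have hsub : Ioi (∑ i, x i) ∩ Ioi (0:ℝ) = Ioi (∑ i, x i) :=
      inter_eq_left.2 (Ioi_subset_Ioi hSx)
    have hFx : ∀ t : ℝ, F (x, t) =
        (Ioi (∑ i, x i)).indicator
          (fun t => f x * ENNReal.ofReal (t ^ n * Real.exp (-t))) t := by
      intro t
      simp only [hF, Set.indicator, mem_setOf_eq, mem_Ioi]
    simp only [hFx]
    rw [lintegral_indicator measurableSet_Ioi _, Measure.restrict_restrict measurableSet_Ioi,
      hsub, lintegral_const_mul _ (measurable_w n)]
  rw [setLIntegral_congr_fun mA step1]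
  rw [lintegral_lintegral_swap (f := fun x t => F (x, t)) (by exact hmeasF.aemeasurable)]
  have step3 : ∀ t : ℝ, t ∈ Ioi (0:ℝ) →
      (∫⁻ x in {x : Fin d → ℝ | ∀ i, 0 ≤ x i}, F (x, t)) =
        ENNReal.ofReal (t ^ n * Real.exp (-t)) * (ENNReal.ofReal (t ^ d) * C) := by
    intro t ht
    have hFt : ∀ x : Fin d → ℝ, F (x, t) =
        {x : Fin d → ℝ | ∑ i, x i < t}.indicator
          (fun x => f x * ENNReal.ofReal (t ^ n * Real.exp (-t))) x := by
      intro x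
      simp only [hF, Set.indicator, mem_setOf_eq]
    simp only [hFt]
    rw [lintegral_indicator (measurableSet_lt measurable_S measurable_const) _,
      Measure.restrict_restrict (measurableSet_lt measurable_S measurable_const)]
    have hset : {x : Fin d → ℝ | ∑ i, x i < t} ∩ {x : Fin d → ℝ | ∀ i, 0 ≤ x i} =
        {x : Fin d → ℝ | (∀ i, 0 ≤ x i) ∧ ∑ i, x i < t} := by
      ext x; simp [mem_setOf_eq, and_comm]
    rw [hset, lintegral_mul_const _ hf, scaling hd f hf hom ht, mul_comm]
  rw [setLIntegral_congr_fun measurableSet_Ioi step3]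
  have step4 : ∀ t : ℝ, t ∈ Ioi (0:ℝ) →
      ENNReal.ofReal (t ^ n * Real.exp (-t)) * (ENNReal.ofReal (t ^ d) * C) =
        ENNReal.ofReal (t ^ (n + d) * Real.exp (-t)) * C := by
    intro t ht
    have h0 : (0:ℝ) < t := ht
    rw [← mul_assoc, ← ENNReal.ofReal_mul (by positivity)]
    congr 2
    rw [pow_add]; ring
  rw [setLIntegral_congr_fun measurableSet_Ioi step4,
    lintegral_mul_const _ (measurable_w (n+d)), lintegral_pow_exp, mul_comm]

/-! ### Product integral over the orthant -/

noncomputable def W (m : ℕ) : ℝ → ℝ := (Ici (0:ℝ)).indicator (fun u => u ^ m * Real.exp (-u))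

lemma hWint (m : ℕ) : Integrable (W m) := by
  have h : IntegrableOn (fun u : ℝ => u ^ m * Real.exp (-u)) (Ici 0) := by
    rw [integrableOn_Ici_iff_integrableOn_Ioi]
    exact integrableOn_pow_exp m le_rfl
  exact h.integrable_indicator measurableSet_Ici

lemma hWnn (m : ℕ) (u : ℝ) : 0 ≤ W m u :=
  indicator_nonneg (fun u hu => by have h0 : (0:ℝ) ≤ u := hu; positivity) u

lemma hWval (m : ℕ) : ∫ u, W m u = (Nat.factorial m : ℝ) := by
  rw [W, integral_indicator measurableSet_Ici, integral_Ici_eq_integral_Ioi,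
    integral_pow_exp_zero]

lemma prod_int (c : Fin d → ℕ) :
    ∫⁻ x in {x : Fin d → ℝ | ∀ i, 0 ≤ x i},
        ENNReal.ofReal ((∏ j, x j ^ c j) * Real.exp (-∑ i, x i)) =
      ∏ j, (Nat.factorial (c j) : ℝ≥0∞) := by
  classical
  have key : ∀ x : Fin d → ℝ,
      {x : Fin d → ℝ | ∀ i, 0 ≤ x i}.indicator
        (fun x => (∏ j, x j ^ c j) * Real.exp (-∑ i, x i)) x = ∏ j, W (c j) (x j) := by
    intro x
    by_cases hx : x ∈ {x : Fin d → ℝ | ∀ i, 0 ≤ x i}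
    · have hx' : ∀ i, 0 ≤ x i := hx
      rw [indicator_of_mem hx]
      have he : Real.exp (-∑ i, x i) = ∏ j, Real.exp (-x j) := by
        rw [← Real.exp_sum, ← Finset.sum_neg_distrib]
      rw [he, ← Finset.prod_mul_distrib]
      refine Finset.prod_congr rfl fun j _ => ?_
      rw [W]
      exact (indicator_of_mem (show x j ∈ Ici (0:ℝ) from hx' j)
        (fun u => u ^ c j * Real.exp (-u))).symm
    · rw [indicator_of_notMem hx]
      have hx2 : ¬ ∀ i, 0 ≤ x i := hx
      push_neg at hx2
      obtain ⟨j, hj⟩ := hx2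
      symm
      refine Finset.prod_eq_zero (Finset.mem_univ j) ?_
      rw [W, indicator_of_notMem (by simpa using hj)]
  calc
    ∫⁻ x in {x : Fin d → ℝ | ∀ i, 0 ≤ x i},
        ENNReal.ofReal ((∏ j, x j ^ c j) * Real.exp (-∑ i, x i))
      = ∫⁻ x : Fin d → ℝ, ENNReal.ofReal (∏ j, W (c j) (x j)) := by
        rw [← lintegral_indicator mA]
        congr 1; funext x
        by_cases hx : x ∈ {x : Fin d → ℝ | ∀ i, 0 ≤ x i}
        · rw [indicator_of_mem hx, ← key x, indicator_of_mem hx]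
        · rw [indicator_of_notMem hx, ← key x, indicator_of_notMem hx, ENNReal.ofReal_zero]
    _ = ENNReal.ofReal (∫ x : Fin d → ℝ, ∏ j, W (c j) (x j)) := by
        rw [volume_pi, ofReal_integral_eq_lintegral_ofReal
          (Integrable.fintype_prod (𝕜 := ℝ) fun j => hWint (c j))
          (ae_of_all _ fun x => Finset.prod_nonneg fun j _ => hWnn _ _)]
    _ = ∏ j, (Nat.factorial (c j) : ℝ≥0∞) := by
        rw [volume_pi, integral_fintype_prod_eq_prod (ι := Fin d) (fun j u => W (c j) u)]
        simp only [hWval]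
        rw [← Nat.cast_prod, ENNReal.ofReal_natCast, Nat.cast_prod]

end SimplexCollisionAux

open SimplexCollisionAux in
/-- **Collision-probability computation for Lemma 13 (goodVolumeUniform).** For the solid
standard simplex `K = {x ∈ ℝ^d : x ≥ 0, ∑ x_i ≤ 1}`, the mean over `K` of
`(∑ x_i²)/(∑ x_i)²` (defined almost everywhere) equals `2/(d+1)`: the normalized point
`x/‖x‖₁` is uniform on the probability simplex and its expected collision probability is
`2/(d+1)`. -/
theorem simplex_normalized_collision_probability (d : ℕ) (hd : 1 ≤ d) :
    (1 / (volume {x : Fin d → ℝ | (∀ i, 0 ≤ x i) ∧ ∑ i, x i ≤ 1}).toReal) *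
        ∫ x in {x : Fin d → ℝ | (∀ i, 0 ≤ x i) ∧ ∑ i, x i ≤ 1},
          (∑ i, (x i) ^ 2) / (∑ i, x i) ^ 2 =
      2 / ((d : ℝ) + 1) := by
  classical
  set A := {x : Fin d → ℝ | ∀ i, 0 ≤ x i} with hA
  set K := {x : Fin d → ℝ | (∀ i, 0 ≤ x i) ∧ ∑ i, x i ≤ 1} with hKdef
  set g : (Fin d → ℝ) → ℝ≥0∞ :=
    fun x => ENNReal.ofReal ((∑ i, x i ^ 2) / (∑ i, x i) ^ 2) with hg
  have hmsq : Measurable fun x : Fin d → ℝ => ∑ i, x i ^ 2 :=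
    Finset.measurable_sum _ fun i _ => (measurable_pi_apply i).pow_const 2
  have hgmeas : Measurable g :=
    ENNReal.measurable_ofReal.comp (hmsq.div (measurable_S.pow_const 2))
  have hghom : ∀ c : ℝ, 0 < c → ∀ x, g (c • x) = g x := by
    intro c hc x
    have hc2 : (c:ℝ) ^ 2 ≠ 0 := pow_ne_zero 2 hc.ne'
    simp only [hg, Pi.smul_apply, smul_eq_mul]
    congr 1
    rw [show ∑ i, (c * x i) ^ 2 = c ^ 2 * ∑ i, x i ^ 2 by
        rw [Finset.mul_sum]; exact Finset.sum_congr rfl fun i _ => by ring,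
      show (∑ i, c * x i) ^ 2 = c ^ 2 * (∑ i, x i) ^ 2 by rw [← Finset.mul_sum]; ring,
      mul_div_mul_left _ _ hc2]
  -- volume of K
  have hfne : (Nat.factorial d : ℝ≥0∞) ≠ 0 := Nat.cast_ne_zero.2 (Nat.factorial_ne_zero d)
  have hfnt : (Nat.factorial d : ℝ≥0∞) ≠ ⊤ := natCast_ne_top _
  have hvol1 : volume K * (Nat.factorial d : ℝ≥0∞) = 1 := by
    have h := layer hd (fun _ => (1:ℝ≥0∞)) measurable_const (fun _ _ _ => rfl) 0
    simp only [one_mul, zero_add] at h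
    have hL : ∫⁻ x in A, (∫⁻ t in Ioi (∑ i, x i),
        ENNReal.ofReal (t ^ 0 * Real.exp (-t))) = 1 := by
      rw [setLIntegral_congr_fun mA (fun x hx =>
        psi0 (Finset.sum_nonneg fun i _ => hx i))]
      simpa using prod_int (d := d) (fun _ => 0)
    rw [hL, setLIntegral_one] at h
    exact h.symm
  have hvolK : volume K = (Nat.factorial d : ℝ≥0∞)⁻¹ := by
    rw [← one_mul ((Nat.factorial d : ℝ≥0∞))⁻¹, ← hvol1, mul_assoc,
      ENNReal.mul_inv_cancel hfne hfnt, mul_one]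
  -- the normalized collision integral
  set C := ∫⁻ x in K, g x with hCdef
  have hgle1 : ∀ x : Fin d → ℝ, (∀ i, 0 ≤ x i) → g x ≤ 1 := by
    intro x hx'
    refine ENNReal.ofReal_le_one.2 ?_
    exact div_le_one_of_le₀
      (Finset.sum_sq_le_sq_sum_of_nonneg fun i _ => hx' i) (sq_nonneg _)
  have hCfin : C ≠ ⊤ := by
    have hle : C ≤ volume K := by
      rw [hCdef, ← setLIntegral_one]
      exact setLIntegral_mono measurable_const fun x hx => hgle1 x hx.1
    exact ne_top_of_le_ne_top (by rw [hvolK]; exact ENNReal.inv_ne_top.2 hfne) hle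
  have hL1 : ∫⁻ x in A, g x *
      ENNReal.ofReal ((∑ i, x i + 1) * Real.exp (-∑ i, x i)) =
      C * (Nat.factorial (1 + d) : ℝ≥0∞) := by
    rw [← layer hd g hgmeas hghom 1]
    refine setLIntegral_congr_fun mA (fun x hx => ?_)
    rw [psi1 (Finset.sum_nonneg fun i _ => hx i)]
  have hL2 : ∫⁻ x in A, g x *
      ENNReal.ofReal (((∑ i, x i) ^ 2 + 2 * (∑ i, x i) + 2) * Real.exp (-∑ i, x i)) =
      C * (Nat.factorial (2 + d) : ℝ≥0∞) := by
    rw [← layer hd g hgmeas hghom 2]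
    refine setLIntegral_congr_fun mA (fun x hx => ?_)
    rw [psi2 (Finset.sum_nonneg fun i _ => hx i)]
  have hQmeas : Measurable fun x : Fin d → ℝ =>
      ENNReal.ofReal ((∑ i, x i ^ 2) * Real.exp (-∑ i, x i)) :=
    ENNReal.measurable_ofReal.comp
      (hmsq.mul (Real.measurable_exp.comp measurable_S.neg))
  have hG1meas : Measurable fun x : Fin d → ℝ =>
      g x * ENNReal.ofReal ((∑ i, x i + 1) * Real.exp (-∑ i, x i)) :=
    hgmeas.mul (ENNReal.measurable_ofReal.comp
      (((measurable_S.add_const 1)).mul (Real.measurable_exp.comp measurable_S.neg)))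
  have hQ : ∫⁻ x in A, ENNReal.ofReal ((∑ i, x i ^ 2) * Real.exp (-∑ i, x i)) =
      2 * (d : ℝ≥0∞) := by
    have hptw : ∀ x : Fin d → ℝ, x ∈ A →
        ENNReal.ofReal ((∑ i, x i ^ 2) * Real.exp (-∑ i, x i)) =
          ∑ i, ENNReal.ofReal (x i ^ 2 * Real.exp (-∑ j, x j)) := by
      intro x hx
      rw [Finset.sum_mul]
      exact ENNReal.ofReal_sum_of_nonneg fun i _ => by positivity
    rw [setLIntegral_congr_fun mA hptw,
      lintegral_finset_sum _ (fun i _ =>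
        show Measurable fun x : Fin d → ℝ =>
            ENNReal.ofReal (x i ^ 2 * Real.exp (-∑ j, x j)) from
          ENNReal.measurable_ofReal.comp
            (((measurable_pi_apply i).pow_const 2).mul
              (Real.measurable_exp.comp measurable_S.neg)))]
    have hterm : ∀ i : Fin d,
        ∫⁻ x in A, ENNReal.ofReal (x i ^ 2 * Real.exp (-∑ j, x j)) = 2 := by
      intro i
      have h := prod_int (d := d) (Pi.single i 2 : Fin d → ℕ)
      have hprodf : (∏ j, (Nat.factorial ((Pi.single i 2 : Fin d → ℕ) j) : ℝ≥0∞)) = 2 := by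
        rw [Finset.prod_eq_single i (fun j _ hji => by rw [Pi.single_eq_of_ne hji]; norm_num)
          (fun hni => absurd (Finset.mem_univ i) hni), Pi.single_eq_same]
        norm_num [Nat.factorial]
      rw [hprodf] at h
      rw [← h]
      refine setLIntegral_congr_fun mA (fun x hx => ?_)
      rw [Finset.prod_eq_single i (fun j _ hji => by rw [Pi.single_eq_of_ne hji, pow_zero])
        (fun hni => absurd (Finset.mem_univ i) hni), Pi.single_eq_same]
    rw [Finset.sum_congr rfl fun i _ => hterm i]
    simp [Finset.sum_const, Finset.card_univ, mul_comm]
  have hcomb : 2 * (d : ℝ≥0∞) + 2 * (C * (Nat.factorial (1 + d) : ℝ≥0∞)) =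
      C * (Nat.factorial (2 + d) : ℝ≥0∞) := by
    rw [← hQ, ← hL1, ← hL2, ← lintegral_const_mul 2 hG1meas, ← lintegral_add_left hQmeas]
    have hae : ∀ᵐ x : Fin d → ℝ, ¬ (∑ i, x i = 0) := by
      rw [ae_iff]; simpa using hyperplane_null hd 0
    refine setLIntegral_congr_fun_ae mA ?_
    filter_upwards [hae] with x hx0 hx
    have hS : (0:ℝ) ≤ ∑ i, x i := Finset.sum_nonneg fun i _ => hx i
    have hq : (0:ℝ) ≤ (∑ i, x i ^ 2) / (∑ i, x i) ^ 2 :=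
      div_nonneg (Finset.sum_nonneg fun i _ => sq_nonneg _) (sq_nonneg _)
    have hE : (0:ℝ) ≤ Real.exp (-∑ i, x i) := (Real.exp_pos _).le
    simp only [hg]
    rw [← ENNReal.ofReal_mul hq, ← ENNReal.ofReal_mul hq,
      show (2:ℝ≥0∞) = ENNReal.ofReal 2 by norm_num,
      ← ENNReal.ofReal_mul (by norm_num),
      ← ENNReal.ofReal_add (by positivity) (by positivity)]
    congr 1
    field_simp
    ring
  -- extract the real equation
  have ha : (2 * (d : ℝ≥0∞)) ≠ ⊤ := ENNReal.mul_ne_top (by norm_num) (natCast_ne_top _)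
  have hb : 2 * (C * (Nat.factorial (1 + d) : ℝ≥0∞)) ≠ ⊤ :=
    ENNReal.mul_ne_top (by norm_num) (ENNReal.mul_ne_top hCfin (natCast_ne_top _))
  have htr := congrArg ENNReal.toReal hcomb
  rw [ENNReal.toReal_add ha hb, ENNReal.toReal_mul, ENNReal.toReal_mul, ENNReal.toReal_mul,
    ENNReal.toReal_mul] at htr
  simp only [ENNReal.toReal_ofNat, ENNReal.toReal_natCast] at htr
  set c := C.toReal with hcdef
  have hfact1 : ((Nat.factorial (1 + d) : ℝ)) = ((Nat.factorial (d + 1) : ℝ)) := by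
    rw [Nat.add_comm]
  have hfact2 : ((Nat.factorial (2 + d) : ℝ)) =
      ((d:ℝ) + 2) * (Nat.factorial (d + 1) : ℝ) := by
    rw [show 2 + d = (d + 1) + 1 by omega, Nat.factorial_succ]
    push_cast
    ring
  rw [hfact1, hfact2] at htr
  set F : ℝ := (Nat.factorial (d + 1) : ℝ) with hF
  have hFpos : 0 < F := by
    rw [hF]; exact_mod_cast Nat.factorial_pos _
  have hdpos : (0:ℝ) < d := by exact_mod_cast Nat.lt_of_lt_of_le Nat.zero_lt_one hd
  have hcF : c * F = 2 := by
    have hexp : c * (((d:ℝ) + 2) * F) = c * F * (d:ℝ) + 2 * (c * F) := by ring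
    rw [hexp] at htr
    have h1 : c * F * (d:ℝ) = 2 * (d:ℝ) := by linarith
    have := mul_right_cancel₀ hdpos.ne' h1
    linarith [this]
  -- final computation
  have hreal : ∫ x in K, ((∑ i, x i ^ 2) / (∑ i, x i) ^ 2) = c := by
    rw [integral_eq_lintegral_of_nonneg_ae
      (ae_of_all _ fun x => div_nonneg (Finset.sum_nonneg fun i _ => sq_nonneg _) (sq_nonneg _))
      ((hmsq.div (measurable_S.pow_const 2)).aestronglyMeasurable)]
  rw [hreal, hvolK, ENNReal.toReal_inv, ENNReal.toReal_natCast]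
  have hdfpos : (0:ℝ) < (Nat.factorial d : ℝ) := by exact_mod_cast Nat.factorial_pos d
  have hFd : F = ((d:ℝ) + 1) * (Nat.factorial d : ℝ) := by
    rw [hF, Nat.factorial_succ]; push_cast; ring
  have hc : c = 2 / F := by
    rw [eq_div_iff hFpos.ne']
    exact hcF
  rw [hc, hFd]
  rw [one_div, inv_inv]
  field_simp
end
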